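/- arXiv:1205.4423 — 8 statements merged into one kernel-verified Lean document; each statement's English description precedes it below -/
import Mathlib

section
/- For b > 1 and real x, define I(b,x) = (1/(2π)) ∫₀^{2π} exp(-i x · arg(1 - b^{-1} e^{iθ})) dθ. Then I(b,x) = (2/π) ∫₀¹ cos(x · arcsin(t/b)) / √(1 - t²) dt. -/
open Real Complex intervalIntegral
open Set MeasureTheory

lemma z_eq (b θ : ℝ) :
    1 - (b:ℂ)⁻¹ * Complex.exp (θ * Complex.I) =
      Complex.ofReal (1 - Real.cos θ / b) + Complex.ofReal (-(Real.sin θ / b)) * Complex.I := by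
  rw [Complex.exp_mul_I]
  push_cast
  ring

lemma zre (b θ : ℝ) : (1 - (b:ℂ)⁻¹ * Complex.exp (θ * Complex.I)).re = 1 - Real.cos θ / b := by
  rw [z_eq]; simp [Complex.cos_ofReal_re, Complex.sin_ofReal_re]

lemma zim (b θ : ℝ) : (1 - (b:ℂ)⁻¹ * Complex.exp (θ * Complex.I)).im = -(Real.sin θ / b) := by
  rw [z_eq]; simp [Complex.cos_ofReal_re, Complex.sin_ofReal_re]

lemma zre_pos {b : ℝ} (hb : 1 < b) (θ : ℝ) :
    0 < (1 - (b:ℂ)⁻¹ * Complex.exp (θ * Complex.I)).re := by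
  rw [zre]
  have h1 : Real.cos θ / b < 1 := by
    rw [div_lt_one (by linarith)]
    exact lt_of_le_of_lt (Real.cos_le_one θ) hb
  linarith

lemma key {b : ℝ} (hb : 1 < b) (u : ℝ) :
    Complex.arg (1 - (b:ℂ)⁻¹ *
        Complex.exp ((↑(u - Real.arcsin (Real.sin u / b)) : ℂ) * Complex.I)) =
      -Real.arcsin (Real.sin u / b) := by
  have hb0 : (0:ℝ) < b := by linarith
  set s := Real.sin u with hs
  set c := Real.cos u with hc
  set g := Real.arcsin (s / b) with hg
  set θ := u - g with hθ
  set r := Real.sqrt (b ^ 2 - s ^ 2) with hr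
  have hs1 : |s| ≤ 1 := Real.abs_sin_le_one u
  have hsb : s / b ∈ Set.Ioo (-1 : ℝ) 1 := by
    have h1 := (abs_le.mp hs1).1
    have h2 := (abs_le.mp hs1).2
    constructor
    · rw [neg_lt, ← neg_div, div_lt_one hb0]; linarith
    · rw [div_lt_one hb0]; linarith
  have hQ0 : (0:ℝ) ≤ b ^ 2 - s ^ 2 := by nlinarith [(abs_le.mp hs1).1, (abs_le.mp hs1).2]
  have hr2 : r ^ 2 = b ^ 2 - s ^ 2 := Real.sq_sqrt hQ0
  have hr0 : 0 < r := Real.sqrt_pos.mpr (by nlinarith [(abs_le.mp hs1).1, (abs_le.mp hs1).2])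
  have hc1 := (abs_le.mp (Real.abs_cos_le_one u)).2
  have hrc : c < r := by
    nlinarith [Real.sin_sq_add_cos_sq u]
  have hsing : Real.sin g = s / b := Real.sin_arcsin hsb.1.le hsb.2.le
  have hcosg : Real.cos g = r / b := by
    rw [hg, Real.cos_arcsin]
    have : 1 - (s / b) ^ 2 = (b ^ 2 - s ^ 2) / b ^ 2 := by field_simp
    rw [this, Real.sqrt_div hQ0, Real.sqrt_sq hb0.le]
  have hsinθ : Real.sin θ = s * (r / b) - c * (s / b) := by
    rw [hθ, Real.sin_sub, hsing, hcosg]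
  have hcosθ : Real.cos θ = c * (r / b) + s * (s / b) := by
    rw [hθ, Real.cos_sub, hsing, hcosg]
  set z := 1 - (b:ℂ)⁻¹ * Complex.exp ((↑θ : ℂ) * Complex.I) with hz
  have hzre : z.re = 1 - Real.cos θ / b := zre b θ
  have hzim : z.im = -(Real.sin θ / b) := zim b θ
  have hzrepos : 0 < z.re := zre_pos hb θ
  have harg : |Complex.arg z| < π / 2 :=
    Complex.abs_arg_lt_pi_div_two_iff.mpr (Or.inl hzrepos)
  have htan : Real.tan (Complex.arg z) = z.im / z.re := Complex.tan_arg z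
  have hquot : z.im / z.re = -(s / r) := by
    have hpos : (0:ℝ) < 1 - (c * (r / b) + s * (s / b)) / b := by
      have h := hzrepos; rw [hzre, hcosθ] at h; exact h
    rw [hzre, hzim, hsinθ, hcosθ, div_eq_iff (ne_of_gt hpos)]
    field_simp
    linear_combination (-s) * hr2
  have hargeq : Complex.arg z = Real.arctan (-(s / r)) := by
    rw [← hquot, ← htan, Real.arctan_tan (by linarith [abs_lt.mp harg]) (by linarith [abs_lt.mp harg])]
  have hgeq : g = Real.arctan (s / r) := by
    rw [hg, Real.arcsin_eq_arctan hsb]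
    congr 1
    rw [show 1 - (s / b) ^ 2 = (b ^ 2 - s ^ 2) / b ^ 2 by field_simp,
      Real.sqrt_div hQ0, Real.sqrt_sq hb0.le]
    field_simp
    rw [← hr, mul_div_assoc, div_self (ne_of_gt hr0), mul_one]
  rw [hargeq, Real.arctan_neg, hgeq]

lemma gderiv {b : ℝ} (hb : 1 < b) (u : ℝ) :
    HasDerivAt (fun v => Real.arcsin (Real.sin v / b))
      (Real.cos u / Real.sqrt (b ^ 2 - Real.sin u ^ 2)) u := by
  have hb0 : (0:ℝ) < b := by linarith
  have hs1 := abs_le.mp (Real.abs_sin_le_one u)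
  have h1 : HasDerivAt (fun v => Real.sin v / b) (Real.cos u / b) u :=
    (Real.hasDerivAt_sin u).div_const b
  have hne1 : Real.sin u / b ≠ -1 := by
    intro h
    have : Real.sin u = -b := by field_simp at h; linarith
    linarith [hs1.1]
  have hne2 : Real.sin u / b ≠ 1 := by
    intro h
    have hsb : Real.sin u = b := by field_simp at h; exact h
    linarith [hs1.2]
  have h2 := (Real.hasDerivAt_arcsin hne1 hne2).comp u h1
  refine h2.congr_deriv ?_
  have hQ0 : (0:ℝ) ≤ b ^ 2 - Real.sin u ^ 2 := by nlinarith
  have : 1 - (Real.sin u / b) ^ 2 = (b ^ 2 - Real.sin u ^ 2) / b ^ 2 := by field_simp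
  rw [this, Real.sqrt_div hQ0, Real.sqrt_sq hb0.le]
  have hrpos : 0 < Real.sqrt (b ^ 2 - Real.sin u ^ 2) := Real.sqrt_pos.mpr (by nlinarith)
  field_simp

lemma sqrt_ne {b : ℝ} (hb : 1 < b) (u : ℝ) : Real.sqrt (b ^ 2 - Real.sin u ^ 2) ≠ 0 := by
  have hs1 := abs_le.mp (Real.abs_sin_le_one u)
  exact ne_of_gt (Real.sqrt_pos.mpr (by nlinarith))

lemma gderiv_cont {b : ℝ} (hb : 1 < b) :
    Continuous (fun u => Real.cos u / Real.sqrt (b ^ 2 - Real.sin u ^ 2)) :=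
  Continuous.div Real.continuous_cos
    (Real.continuous_sqrt.comp (by continuity)) (sqrt_ne hb)

lemma argsymm {b : ℝ} (hb : 1 < b) (θ : ℝ) :
    Complex.arg (1 - (b:ℂ)⁻¹ * Complex.exp ((↑(2 * π - θ) : ℂ) * Complex.I)) =
      -Complex.arg (1 - (b:ℂ)⁻¹ * Complex.exp ((θ:ℂ) * Complex.I)) := by
  have hexp : Complex.exp ((↑(2 * π - θ) : ℂ) * Complex.I) =
      Complex.exp (-(↑θ : ℂ) * Complex.I) := by
    have : (↑(2 * π - θ) : ℂ) * Complex.I = 2 * ↑π * Complex.I + -(↑θ : ℂ) * Complex.I := by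
      push_cast; ring
    rw [this, Complex.exp_add, Complex.exp_two_pi_mul_I, one_mul]
  have hconj : 1 - (b:ℂ)⁻¹ * Complex.exp (-(↑θ : ℂ) * Complex.I) =
      (starRingEnd ℂ) (1 - (b:ℂ)⁻¹ * Complex.exp ((↑θ : ℂ) * Complex.I)) := by
    rw [map_sub, map_one, map_mul, ← Complex.exp_conj]
    have h1 : (starRingEnd ℂ) ((b:ℂ)⁻¹) = (b:ℂ)⁻¹ := by
      simp [map_inv₀, Complex.conj_ofReal]
    have h2 : (starRingEnd ℂ) ((↑θ:ℂ) * Complex.I) = -(↑θ:ℂ) * Complex.I := by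
      simp [map_mul, Complex.conj_ofReal, Complex.conj_I]
      try ring
    rw [h1, h2]
  rw [hexp, hconj, Complex.arg_conj]
  rw [if_neg]
  intro h
  have := (Complex.arg_eq_pi_iff.mp h).1
  have := zre_pos hb θ
  linarith

lemma rhs_integrable {b : ℝ} (hb : 1 < b) (x : ℝ) :
    IntervalIntegrable
      (fun t => (1 / Real.sqrt (1 - t ^ 2)) •
        Real.cos (x * Real.arcsin (Real.sin (Real.arcsin t) / b))) volume 0 1 := by
  have hmaj : IntervalIntegrable (fun t : ℝ => (1 - t) ^ (-(1/2) : ℝ)) volume 0 1 := by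
    have h := (intervalIntegral.intervalIntegrable_rpow' (a := 0) (b := 1)
      (r := -(1/2)) (by norm_num)).comp_sub_left 1
    simpa using h.symm
  apply hmaj.mono_fun
  · apply Measurable.aestronglyMeasurable
    apply Measurable.mul
    · exact (measurable_const.div ((continuous_const.sub (continuous_pow 2)).sqrt.measurable))
    · exact (Real.continuous_cos.comp (continuous_const.mul
        ((Real.continuous_arcsin.comp ((Real.continuous_sin.comp Real.continuous_arcsin).div_const b))))).measurable
  · rw [Set.uIoc_of_le (zero_le_one' ℝ)]
    refine (MeasureTheory.ae_restrict_iff' measurableSet_Ioc).mpr (Filter.Eventually.of_forall ?_)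
    intro t ht
    have h0t : 0 < t := ht.1
    have ht1 : t ≤ 1 := ht.2
    have h1t : 0 ≤ 1 - t := by linarith
    simp only [Real.norm_eq_abs, smul_eq_mul, abs_mul]
    have habs : |(1 - t) ^ (-(1/2) : ℝ)| = (1 - t) ^ (-(1/2) : ℝ) :=
      abs_of_nonneg (Real.rpow_nonneg h1t _)
    rw [habs]
    have hsq : Real.sqrt (1 - t) ≤ Real.sqrt (1 - t ^ 2) := by
      apply Real.sqrt_le_sqrt; nlinarith
    have hrw : (1 - t) ^ (-(1/2) : ℝ) = 1 / Real.sqrt (1 - t) := by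
      rw [Real.rpow_neg h1t, Real.sqrt_eq_rpow, one_div, one_div]
    rw [hrw]
    calc |1 / Real.sqrt (1 - t ^ 2)| * |Real.cos (x * Real.arcsin (Real.sin (Real.arcsin t) / b))|
        ≤ |1 / Real.sqrt (1 - t ^ 2)| * 1 := by
          exact mul_le_mul_of_nonneg_left (Real.abs_cos_le_one _) (abs_nonneg _)
      _ = |1 / Real.sqrt (1 - t ^ 2)| := mul_one _
      _ ≤ 1 / Real.sqrt (1 - t) := by
          rcases eq_or_lt_of_le ht1 with h | h
          · subst h; simp
          · have hpos : 0 < Real.sqrt (1 - t) := Real.sqrt_pos.mpr (by linarith)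
            rw [_root_.abs_of_nonneg (show (0:ℝ) ≤ 1 / Real.sqrt (1 - t ^ 2) by positivity)]
            exact one_div_le_one_div_of_le hpos hsq

lemma R5 {b : ℝ} (hb : 1 < b) (x : ℝ) :
    ∫ t in (0:ℝ)..1, Real.cos (x * Real.arcsin (t / b)) / Real.sqrt (1 - t ^ 2) =
      ∫ u in (0:ℝ)..(π/2), Real.cos (x * Real.arcsin (Real.sin u / b)) := by
  have h := intervalIntegral.integral_comp_smul_deriv''' (a := 0) (b := 1)
    (f := Real.arcsin) (f' := fun t => 1 / Real.sqrt (1 - t ^ 2))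
    (g := fun u => Real.cos (x * Real.arcsin (Real.sin u / b)))
    (Real.continuous_arcsin.continuousOn)
    (fun t ht => by
      have ht' : t ∈ Set.Ioo (0:ℝ) 1 := by simpa using ht
      exact (Real.hasDerivAt_arcsin (by linarith [ht'.1]) (ne_of_lt ht'.2)).hasDerivWithinAt)
    ((Real.continuous_cos.comp (continuous_const.mul
      ((Real.continuous_arcsin.comp (Real.continuous_sin.div_const b))))).continuousOn)
    (((Real.continuous_cos.comp (continuous_const.mul
      ((Real.continuous_arcsin.comp (Real.continuous_sin.div_const b))))).continuousOn).integrableOn_compact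
      (isCompact_uIcc.image_of_continuousOn Real.continuous_arcsin.continuousOn))
    (by
      have h2 := rhs_integrable hb x
      rw [intervalIntegrable_iff] at h2
      rw [Set.uIcc_of_le (zero_le_one' ℝ)]
      rw [integrableOn_Icc_iff_integrableOn_Ioc]
      rw [Set.uIoc_of_le (zero_le_one' ℝ)] at h2
      exact h2)
  rw [Real.arcsin_zero, Real.arcsin_one] at h
  rw [← h]
  apply intervalIntegral.integral_congr
  intro t ht
  rw [Set.uIcc_of_le (zero_le_one' ℝ)] at ht
  have h1 : Real.sin (Real.arcsin t) = t := Real.sin_arcsin (by linarith [ht.1]) ht.2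
  simp only [Function.comp_apply, smul_eq_mul, h1]
  ring

lemma realpart {b : ℝ} (hb : 1 < b) (x : ℝ) :
    ∫ θ in (0:ℝ)..π, Real.cos (x * Complex.arg (1 - (b:ℂ)⁻¹ * Complex.exp ((θ:ℂ) * Complex.I))) =
      2 * ∫ t in (0:ℝ)..1, Real.cos (x * Real.arcsin (t / b)) / Real.sqrt (1 - t ^ 2) := by
  have hgfc : Continuous (fun u : ℝ => Real.arcsin (Real.sin u / b)) :=
    Real.continuous_arcsin.comp (Real.continuous_sin.div_const b)
  have hcosgf : Continuous (fun u : ℝ => Real.cos (x * Real.arcsin (Real.sin u / b))) :=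
    Real.continuous_cos.comp (continuous_const.mul hgfc)
  have hAcont : Continuous
      (fun θ : ℝ => Complex.arg (1 - (b:ℂ)⁻¹ * Complex.exp ((θ:ℂ) * Complex.I))) := by
    apply continuous_iff_continuousAt.mpr
    intro θ
    have hzc : Continuous (fun θ : ℝ => 1 - (b:ℂ)⁻¹ * Complex.exp ((θ:ℂ) * Complex.I)) := by
      continuity
    exact ContinuousAt.comp (g := Complex.arg)
      (f := fun θ : ℝ => 1 - (b:ℂ)⁻¹ * Complex.exp ((θ:ℂ) * Complex.I))
      (Complex.continuousAt_arg
        (Complex.mem_slitPlane_iff.mpr (Or.inl (zre_pos hb θ)))) hzc.continuousAt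
  have hFc : Continuous (fun θ : ℝ =>
      Real.cos (x * Complex.arg (1 - (b:ℂ)⁻¹ * Complex.exp ((θ:ℂ) * Complex.I)))) :=
    Real.continuous_cos.comp (continuous_const.mul hAcont)
  -- R1 : substitution θ = u - arcsin (sin u / b)
  have h1 := intervalIntegral.integral_comp_smul_deriv (a := 0) (b := π)
    (f := fun u => u - Real.arcsin (Real.sin u / b))
    (f' := fun u => 1 - Real.cos u / Real.sqrt (b ^ 2 - Real.sin u ^ 2))
    (g := fun θ => Real.cos (x * Complex.arg (1 - (b:ℂ)⁻¹ * Complex.exp ((θ:ℂ) * Complex.I))))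
    (fun u _ => (hasDerivAt_id u).sub (gderiv hb u))
    ((continuous_const.sub (gderiv_cont hb)).continuousOn) hFc
  simp only [Function.comp_apply, Real.sin_zero, Real.sin_pi, zero_div, Real.arcsin_zero,
    sub_zero] at h1
  rw [← h1]
  -- rewrite integrand using key lemma
  have h2 : ∀ u ∈ Set.uIcc (0:ℝ) π,
      (1 - Real.cos u / Real.sqrt (b ^ 2 - Real.sin u ^ 2)) •
        Real.cos (x * Complex.arg (1 - (b:ℂ)⁻¹ *
          Complex.exp ((↑(u - Real.arcsin (Real.sin u / b)) : ℂ) * Complex.I))) =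
      (1 - Real.cos u / Real.sqrt (b ^ 2 - Real.sin u ^ 2)) *
        Real.cos (x * Real.arcsin (Real.sin u / b)) := by
    intro u _
    rw [key hb u, smul_eq_mul, mul_neg, Real.cos_neg]
  rw [intervalIntegral.integral_congr h2]
  -- split the integral
  have hsplit : ∫ u in (0:ℝ)..π,
      (1 - Real.cos u / Real.sqrt (b ^ 2 - Real.sin u ^ 2)) *
        Real.cos (x * Real.arcsin (Real.sin u / b)) =
      (∫ u in (0:ℝ)..π, Real.cos (x * Real.arcsin (Real.sin u / b))) -
      ∫ u in (0:ℝ)..π, (Real.cos u / Real.sqrt (b ^ 2 - Real.sin u ^ 2)) *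
        Real.cos (x * Real.arcsin (Real.sin u / b)) := by
    rw [← intervalIntegral.integral_sub (g := fun u => (Real.cos u / Real.sqrt (b ^ 2 - Real.sin u ^ 2)) *
        Real.cos (x * Real.arcsin (Real.sin u / b))) (hcosgf.intervalIntegrable _ _)
      (((gderiv_cont hb).mul hcosgf).intervalIntegrable _ _)]
    congr 1
    funext u
    ring
  rw [hsplit]
  -- the second integral vanishes
  have hzero : ∫ u in (0:ℝ)..π, (Real.cos u / Real.sqrt (b ^ 2 - Real.sin u ^ 2)) *
      Real.cos (x * Real.arcsin (Real.sin u / b)) = 0 := by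
    have h3 := intervalIntegral.integral_comp_smul_deriv (a := 0) (b := π)
      (f := fun u => Real.arcsin (Real.sin u / b))
      (f' := fun u => Real.cos u / Real.sqrt (b ^ 2 - Real.sin u ^ 2))
      (g := fun t => Real.cos (x * t))
      (fun u _ => gderiv hb u) ((gderiv_cont hb).continuousOn)
      (Real.continuous_cos.comp (continuous_const.mul continuous_id))
    simp only [smul_eq_mul, Function.comp_apply] at h3
    rw [h3]
    have : Real.arcsin (Real.sin 0 / b) = Real.arcsin (Real.sin π / b) := by
      simp [Real.sin_zero, Real.sin_pi]
    rw [this, intervalIntegral.integral_same]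
  rw [hzero, sub_zero]
  -- reflection
  have h4 := intervalIntegral.integral_comp_sub_left (a := (0:ℝ)) (b := π/2)
    (fun u => Real.cos (x * Real.arcsin (Real.sin u / b))) π
  rw [show π - π/2 = π/2 by ring, sub_zero] at h4
  simp only [Real.sin_pi_sub] at h4
  have h5 : ∫ u in (0:ℝ)..π, Real.cos (x * Real.arcsin (Real.sin u / b)) =
      2 * ∫ u in (0:ℝ)..(π/2), Real.cos (x * Real.arcsin (Real.sin u / b)) := by
    rw [← intervalIntegral.integral_add_adjacent_intervals
      (hcosgf.intervalIntegrable 0 (π/2)) (hcosgf.intervalIntegrable (π/2) π)]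
    rw [← h4]
    ring
  rw [h5, R5 hb x]

lemma argcont {b : ℝ} (hb : 1 < b) :
    Continuous (fun θ : ℝ => Complex.arg (1 - (b:ℂ)⁻¹ * Complex.exp ((θ:ℂ) * Complex.I))) := by
  apply continuous_iff_continuousAt.mpr
  intro θ
  have hzc : Continuous (fun θ : ℝ => 1 - (b:ℂ)⁻¹ * Complex.exp ((θ:ℂ) * Complex.I)) := by
    continuity
  exact ContinuousAt.comp (g := Complex.arg)
    (f := fun θ : ℝ => 1 - (b:ℂ)⁻¹ * Complex.exp ((θ:ℂ) * Complex.I))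
    (Complex.continuousAt_arg
      (Complex.mem_slitPlane_iff.mpr (Or.inl (zre_pos hb θ)))) hzc.continuousAt

theorem I_eq_arcsin_integral (b : ℝ) (hb : 1 < b) (x : ℝ) :
    (1 / (2 * π) : ℂ) *
        ∫ θ in (0:ℝ)..(2 * π),
          Complex.exp (-Complex.I * x *
            (Complex.arg (1 - (b:ℂ)⁻¹ * Complex.exp (θ * Complex.I)) : ℂ)) =
      (((2 / π) * ∫ t in (0:ℝ)..1,
          Real.cos (x * Real.arcsin (t / b)) / Real.sqrt (1 - t ^ 2) : ℝ) : ℂ) := by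
  have hπ : (0:ℝ) < π := Real.pi_pos
  have hAc := argcont hb
  have hfc : Continuous (fun θ : ℝ => Complex.exp (-Complex.I * x *
      ((Complex.arg (1 - (b:ℂ)⁻¹ * Complex.exp ((θ:ℂ) * Complex.I)) : ℝ) : ℂ))) :=
    Complex.continuous_exp.comp (continuous_const.mul (Complex.continuous_ofReal.comp hAc))
  have hgc : Continuous (fun θ : ℝ => Complex.exp (Complex.I * x *
      ((Complex.arg (1 - (b:ℂ)⁻¹ * Complex.exp ((θ:ℂ) * Complex.I)) : ℝ) : ℂ))) :=
    Complex.continuous_exp.comp (continuous_const.mul (Complex.continuous_ofReal.comp hAc))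
  -- split [0, 2π] into [0, π] ∪ [π, 2π]
  have hsplit : (∫ θ in (0:ℝ)..(2 * π), Complex.exp (-Complex.I * x *
        ((Complex.arg (1 - (b:ℂ)⁻¹ * Complex.exp ((θ:ℂ) * Complex.I)) : ℝ) : ℂ))) =
      (∫ θ in (0:ℝ)..π, Complex.exp (-Complex.I * x *
        ((Complex.arg (1 - (b:ℂ)⁻¹ * Complex.exp ((θ:ℂ) * Complex.I)) : ℝ) : ℂ))) +
      ∫ θ in π..(2 * π), Complex.exp (-Complex.I * x *
        ((Complex.arg (1 - (b:ℂ)⁻¹ * Complex.exp ((θ:ℂ) * Complex.I)) : ℝ) : ℂ)) :=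
    (intervalIntegral.integral_add_adjacent_intervals
      (hfc.intervalIntegrable _ _) (hfc.intervalIntegrable _ _)).symm
  -- reflect the second piece
  have hB := intervalIntegral.integral_comp_sub_left (a := (0:ℝ)) (b := π)
    (fun θ : ℝ => Complex.exp (-Complex.I * x *
      ((Complex.arg (1 - (b:ℂ)⁻¹ * Complex.exp ((θ:ℂ) * Complex.I)) : ℝ) : ℂ))) (2 * π)
  rw [show 2 * π - π = π by ring, sub_zero] at hB
  have hB' : (∫ θ in π..(2 * π), Complex.exp (-Complex.I * x *
        ((Complex.arg (1 - (b:ℂ)⁻¹ * Complex.exp ((θ:ℂ) * Complex.I)) : ℝ) : ℂ))) =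
      ∫ θ in (0:ℝ)..π, Complex.exp (Complex.I * x *
        ((Complex.arg (1 - (b:ℂ)⁻¹ * Complex.exp ((θ:ℂ) * Complex.I)) : ℝ) : ℂ)) := by
    rw [← hB]
    apply intervalIntegral.integral_congr
    intro θ _
    simp only
    rw [argsymm hb θ]
    push_cast
    ring_nf
  rw [hsplit, hB']
  -- combine into a real cosine integral
  have hC : (∫ θ in (0:ℝ)..π, Complex.exp (-Complex.I * x *
        ((Complex.arg (1 - (b:ℂ)⁻¹ * Complex.exp ((θ:ℂ) * Complex.I)) : ℝ) : ℂ))) +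
      (∫ θ in (0:ℝ)..π, Complex.exp (Complex.I * x *
        ((Complex.arg (1 - (b:ℂ)⁻¹ * Complex.exp ((θ:ℂ) * Complex.I)) : ℝ) : ℂ))) =
      ∫ θ in (0:ℝ)..π, ((2 * Real.cos (x *
        Complex.arg (1 - (b:ℂ)⁻¹ * Complex.exp ((θ:ℂ) * Complex.I))) : ℝ) : ℂ) := by
    rw [← intervalIntegral.integral_add (hfc.intervalIntegrable _ _) (hgc.intervalIntegrable _ _)]
    apply intervalIntegral.integral_congr
    intro θ _
    simp only
    set a : ℝ := Complex.arg (1 - (b:ℂ)⁻¹ * Complex.exp ((θ:ℂ) * Complex.I)) with ha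
    rw [Complex.ofReal_mul, Complex.ofReal_cos, Complex.ofReal_mul]
    rw [show ((2:ℝ):ℂ) = 2 from by norm_num]
    rw [Complex.two_cos]
    push_cast
    ring_nf
  rw [hC, intervalIntegral.integral_ofReal]
  have hreal : (∫ θ in (0:ℝ)..π, 2 * Real.cos (x *
      Complex.arg (1 - (b:ℂ)⁻¹ * Complex.exp ((θ:ℂ) * Complex.I)))) =
      2 * (2 * ∫ t in (0:ℝ)..1, Real.cos (x * Real.arcsin (t / b)) / Real.sqrt (1 - t ^ 2)) := by
    rw [intervalIntegral.integral_const_mul, realpart hb x]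
  rw [hreal]
  have hπc : (π : ℂ) ≠ 0 := Complex.ofReal_ne_zero.mpr (ne_of_gt hπ)
  push_cast
  field_simp
end

section
/- For b > 1 and real x, I(b, 2x) := (2/π) ∫₀¹ cos(2x · arcsin(t/b)) / √(1 - t²) dt equals 1 + ∑_{n=1}^∞ (1/(b^{2n} n!²)) ∏_{j=0}^{n-1} (j² - x²), i.e. I(b,2x) = ₂F₁(-x, x; 1; b^{-2}). -/
open Real Finset

/-- Taylor coefficients of `cos (2*x*arcsin u)` in `u^2`. -/
noncomputable def aCoef (x : ℝ) (n : ℕ) : ℝ :=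
  (∏ j ∈ Finset.range n, ((j : ℝ) ^ 2 - x ^ 2)) * 4 ^ n / ((2 * n).factorial : ℝ)

lemma aCoef_zero (x : ℝ) : aCoef x 0 = 1 := by simp [aCoef]

lemma two_succ_factorial (n : ℕ) :
    ((2 * (n + 1)).factorial : ℝ) = (2 * n + 2) * ((2 * n + 1) * ((2 * n).factorial : ℝ)) := by
  have h : 2 * (n + 1) = (2 * n + 1) + 1 := by ring
  rw [h, Nat.factorial_succ, Nat.factorial_succ]
  push_cast
  ring_nf

lemma aCoef_succ (x : ℝ) (n : ℕ) :
    aCoef x (n + 1) * ((2 * (n : ℝ) + 2) * (2 * n + 1)) = 4 * ((n : ℝ) ^ 2 - x ^ 2) * aCoef x n := by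
  have h1 : ((2 * n).factorial : ℝ) ≠ 0 := Nat.cast_ne_zero.2 (Nat.factorial_ne_zero _)
  have h2 : (2 * (n : ℝ) + 2) ≠ 0 := by positivity
  have h3 : (2 * (n : ℝ) + 1) ≠ 0 := by positivity
  unfold aCoef
  rw [Finset.prod_range_succ, two_succ_factorial]
  push_cast
  field_simp
  ring

lemma aCoef_abs_succ (x : ℝ) (n : ℕ) :
    |aCoef x (n + 1)| * ((2 * (n : ℝ) + 2) * (2 * n + 1))
      = 4 * |((n : ℝ) ^ 2 - x ^ 2)| * |aCoef x n| := by
  have hpos : (0:ℝ) < (2 * (n : ℝ) + 2) * (2 * n + 1) := by positivity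
  calc |aCoef x (n + 1)| * ((2 * (n : ℝ) + 2) * (2 * n + 1))
      = |aCoef x (n + 1) * ((2 * (n : ℝ) + 2) * (2 * n + 1))| := by
        rw [abs_mul, abs_of_pos hpos]
    _ = |4 * ((n : ℝ) ^ 2 - x ^ 2) * aCoef x n| := by rw [aCoef_succ]
    _ = 4 * |((n : ℝ) ^ 2 - x ^ 2)| * |aCoef x n| := by
        rw [abs_mul, abs_mul, abs_of_nonneg (by norm_num : (0:ℝ) ≤ 4)]

lemma aCoef_step1 (x : ℝ) (n : ℕ) :
    |aCoef x (n + 1)| ≤ (1 + 2 * x ^ 2) * |aCoef x n| := by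
  have hpos : (0:ℝ) < (2 * (n : ℝ) + 2) * (2 * n + 1) := by positivity
  rw [← mul_le_mul_iff_left₀ hpos, aCoef_abs_succ]
  have hn : (0:ℝ) ≤ (n:ℝ) := Nat.cast_nonneg n
  have habs : |((n : ℝ) ^ 2 - x ^ 2)| ≤ (n:ℝ)^2 + x^2 := by
    rw [abs_le]; constructor <;> nlinarith [sq_nonneg (n:ℝ), sq_nonneg x]
  have ha := abs_nonneg (aCoef x n)
  nlinarith [mul_le_mul_of_nonneg_right habs ha, sq_nonneg x, sq_nonneg (n:ℝ),
    mul_nonneg (mul_nonneg hn hn) (sq_nonneg x), mul_nonneg hn (sq_nonneg x),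
    mul_nonneg (mul_nonneg (mul_nonneg hn hn) (sq_nonneg x)) ha,
    mul_nonneg (mul_nonneg hn (sq_nonneg x)) ha, mul_nonneg hn ha,
    mul_nonneg (mul_nonneg hn hn) ha, mul_nonneg (sq_nonneg x) ha]

lemma aCoef_step2 (x : ℝ) (n : ℕ) (hx : x ^ 2 ≤ (n:ℝ)) :
    |aCoef x (n + 1)| ≤ |aCoef x n| := by
  have hpos : (0:ℝ) < (2 * (n : ℝ) + 2) * (2 * n + 1) := by positivity
  rw [← mul_le_mul_iff_left₀ hpos, aCoef_abs_succ]
  have hn : (0:ℝ) ≤ (n:ℝ) := Nat.cast_nonneg n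
  have habs : 4 * |((n : ℝ) ^ 2 - x ^ 2)| ≤ (2 * (n : ℝ) + 2) * (2 * n + 1) := by
    have h1 : |((n : ℝ) ^ 2 - x ^ 2)| ≤ (n:ℝ) ^ 2 + (n:ℝ) := by
      rw [abs_le]; constructor <;> nlinarith [sq_nonneg x, sq_nonneg (n:ℝ)]
    nlinarith
  have ha := abs_nonneg (aCoef x n)
  nlinarith [mul_le_mul_of_nonneg_right habs ha]

lemma aCoef_bound (x : ℝ) : ∃ C : ℝ, 0 < C ∧ ∀ n, |aCoef x n| ≤ C := by
  set N := ⌈x ^ 2⌉₊ with hN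
  refine ⟨(1 + 2 * x ^ 2) ^ N, by positivity, fun n => ?_⟩
  have hbase : (1:ℝ) ≤ 1 + 2 * x ^ 2 := by nlinarith [sq_nonneg x]
  have key : ∀ n, |aCoef x n| ≤ (1 + 2 * x ^ 2) ^ (min n N) := by
    intro n
    induction n with
    | zero => simp [aCoef_zero]
    | succ n ih =>
      by_cases h : n < N
      · have hmin : min (n + 1) N = min n N + 1 := by omega
        rw [hmin, pow_succ]
        calc |aCoef x (n + 1)| ≤ (1 + 2 * x ^ 2) * |aCoef x n| := aCoef_step1 x n
          _ ≤ (1 + 2 * x ^ 2) * (1 + 2 * x ^ 2) ^ (min n N) := by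
              apply mul_le_mul_of_nonneg_left ih (by positivity)
          _ = (1 + 2 * x ^ 2) ^ (min n N) * (1 + 2 * x ^ 2) := by ring
      · have hxn : x ^ 2 ≤ (n : ℝ) := by
          calc x ^ 2 ≤ (N : ℝ) := Nat.le_ceil _
            _ ≤ (n : ℝ) := by exact_mod_cast Nat.cast_le.2 (not_lt.1 h)
        have hmin : min (n + 1) N = min n N := by omega
        rw [hmin]
        exact le_trans (aCoef_step2 x n hxn) ih
  calc |aCoef x n| ≤ (1 + 2 * x ^ 2) ^ (min n N) := key n
    _ ≤ (1 + 2 * x ^ 2) ^ N := pow_le_pow_right₀ hbase (min_le_right _ _)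

lemma summable_pow_mul_geo (r : ℝ) (hr0 : 0 ≤ r) (hr1 : r < 1) (c : ℝ) (k : ℕ) :
    Summable (fun n : ℕ => c * (n : ℝ) ^ k * r ^ n) := by
  have h : Summable (fun n : ℕ => (n : ℝ) ^ k * r ^ n) := by
    have := summable_pow_mul_geometric_of_norm_lt_one (R := ℝ) k
      (r := r) (by rwa [Real.norm_eq_abs, abs_of_nonneg hr0])
    exact this
  simpa [mul_assoc] using h.mul_left c


noncomputable def gF (x : ℝ) (n : ℕ) (θ : ℝ) : ℝ := aCoef x n * Real.sin θ ^ (2 * n)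

noncomputable def g1F (x : ℝ) (n : ℕ) (θ : ℝ) : ℝ :=
  aCoef x n * (((2 * n : ℕ) : ℝ) * Real.sin θ ^ (2 * n - 1) * Real.cos θ)

noncomputable def g2F (x : ℝ) (n : ℕ) (θ : ℝ) : ℝ :=
  aCoef x n * ((((2 * n : ℕ) : ℝ) * (((2 * n - 1 : ℕ) : ℝ) *
      Real.sin θ ^ (2 * n - 1 - 1) * Real.cos θ)) * Real.cos θ +
    (((2 * n : ℕ) : ℝ) * Real.sin θ ^ (2 * n - 1)) * (-Real.sin θ))

lemma gF_hasDeriv (x : ℝ) (n : ℕ) (θ : ℝ) : HasDerivAt (gF x n) (g1F x n θ) θ :=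
  ((Real.hasDerivAt_sin θ).pow (2 * n)).const_mul (aCoef x n)

lemma g1F_hasDeriv (x : ℝ) (n : ℕ) (θ : ℝ) : HasDerivAt (g1F x n) (g2F x n θ) θ :=
  ((((Real.hasDerivAt_sin θ).pow (2 * n - 1)).const_mul (((2 * n : ℕ) : ℝ))).mul
    (Real.hasDerivAt_cos θ)).const_mul (aCoef x n)

lemma sub_one_le_two_mul_sub_one (n : ℕ) : n - 1 ≤ 2 * n - 1 := by omega

lemma norm_g1F_le {x C r : ℝ} (hC0 : 0 < C) (hC : ∀ m, |aCoef x m| ≤ C)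
    (hr0 : 0 < r) (hr1 : r < 1) {θ : ℝ} (hs : |Real.sin θ| ≤ r) (n : ℕ) :
    ‖g1F x n θ‖ ≤ 2 * C / r * ((n : ℝ) + 1) * r ^ n := by
  rcases Nat.eq_zero_or_pos n with hn | hn
  · subst hn
    simp only [g1F, Nat.mul_zero, Nat.cast_zero, zero_mul, mul_zero, norm_zero]
    positivity
  have e1 : |((2 * n : ℕ) : ℝ)| = 2 * (n : ℝ) := by
    rw [abs_of_nonneg (by positivity)]; push_cast; ring
  have hpow : |Real.sin θ| ^ (2 * n - 1) ≤ r ^ (n - 1) :=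
    le_trans (pow_le_pow_left₀ (abs_nonneg _) hs _)
      (pow_le_pow_of_le_one hr0.le hr1.le (sub_one_le_two_mul_sub_one n))
  have hrw : r ^ (n - 1) = r ^ n / r := by
    rw [eq_div_iff hr0.ne', ← pow_succ]
    congr 1
    omega
  have : ‖g1F x n θ‖ ≤ C * (2 * (n : ℝ) * r ^ (n - 1) * 1) := by
    simp only [g1F, Real.norm_eq_abs, abs_mul, abs_pow, e1]
    apply mul_le_mul (hC n) _ (by positivity) hC0.le
    apply mul_le_mul _ (Real.abs_cos_le_one θ) (abs_nonneg _) (by positivity)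
    exact mul_le_mul_of_nonneg_left hpow (by positivity)
  refine this.trans ?_
  rw [hrw]
  have hrn : 0 ≤ r ^ n := by positivity
  have hn' : (0:ℝ) ≤ (n:ℝ) := Nat.cast_nonneg n
  have key1 : C * (2 * (n:ℝ) * (r ^ n / r) * 1) = (C * (2 * (n:ℝ)) * r ^ n) / r := by ring
  have key2 : 2 * C / r * ((n:ℝ) + 1) * r ^ n = (2 * C * ((n:ℝ) + 1) * r ^ n) / r := by ring
  rw [key1, key2, div_le_div_iff₀ hr0 hr0]
  nlinarith [mul_nonneg (mul_nonneg hC0.le hn') hrn, mul_nonneg hC0.le hrn,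
    mul_nonneg hr0.le (mul_nonneg (mul_nonneg hC0.le hn') hrn),
    mul_nonneg hr0.le (mul_nonneg hC0.le hrn)]

lemma norm_g2F_le {x C r : ℝ} (hC0 : 0 < C) (hC : ∀ m, |aCoef x m| ≤ C)
    (hr0 : 0 < r) (hr1 : r < 1) {θ : ℝ} (hs : |Real.sin θ| ≤ r) (n : ℕ) :
    ‖g2F x n θ‖ ≤ 8 * C / r * ((n : ℝ) + 1) ^ 2 * r ^ n := by
  rcases Nat.eq_zero_or_pos n with hn | hn
  · subst hn
    simp only [g2F, Nat.mul_zero, Nat.cast_zero, zero_mul, mul_zero, zero_add,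
      add_zero, norm_zero]
    positivity
  have e1 : |((2 * n : ℕ) : ℝ)| = 2 * (n : ℝ) := by
    rw [abs_of_nonneg (by positivity)]; push_cast; ring
  have e2 : |((2 * n - 1 : ℕ) : ℝ)| ≤ 2 * (n : ℝ) := by
    rw [abs_of_nonneg (by positivity)]
    have h : (2 * n - 1 : ℕ) ≤ (2 * n : ℕ) := by omega
    calc ((2 * n - 1 : ℕ) : ℝ) ≤ ((2 * n : ℕ) : ℝ) := Nat.cast_le.2 h
      _ = 2 * (n : ℝ) := by push_cast; ring
  have hcos := Real.abs_cos_le_one θ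
  have hle21 : (2 * n - 1 - 1 : ℕ) = 2 * n - 2 := by omega
  have hp1 : |Real.sin θ| ^ (2 * n - 1 - 1) ≤ r ^ (n - 1) := by
    refine le_trans (pow_le_pow_left₀ (abs_nonneg _) hs _) ?_
    apply pow_le_pow_of_le_one hr0.le hr1.le
    omega
  have hp2 : |Real.sin θ| ^ (2 * n - 1) ≤ r ^ (n - 1) :=
    le_trans (pow_le_pow_left₀ (abs_nonneg _) hs _)
      (pow_le_pow_of_le_one hr0.le hr1.le (sub_one_le_two_mul_sub_one n))
  have hrw : r ^ (n - 1) = r ^ n / r := by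
    rw [eq_div_iff hr0.ne', ← pow_succ]
    congr 1
    omega
  have hterm1 : |aCoef x n * ((((2 * n : ℕ) : ℝ) * (((2 * n - 1 : ℕ) : ℝ) *
      Real.sin θ ^ (2 * n - 1 - 1) * Real.cos θ)) * Real.cos θ)|
      ≤ C * (2 * (n : ℝ) * ((2 * (n : ℝ)) * r ^ (n - 1) * 1) * 1) := by
    rw [abs_mul, abs_mul, abs_mul, abs_mul, abs_mul, abs_pow, e1]
    apply mul_le_mul (hC n) _ (by positivity) hC0.le
    apply mul_le_mul _ hcos (abs_nonneg _) (by positivity)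
    apply mul_le_mul_of_nonneg_left _ (by positivity)
    apply mul_le_mul _ hcos (abs_nonneg _) (by positivity)
    exact mul_le_mul e2 hp1 (by positivity) (by positivity)
  have hterm2 : |aCoef x n * ((((2 * n : ℕ) : ℝ) * Real.sin θ ^ (2 * n - 1)) *
      (-Real.sin θ))| ≤ C * (2 * (n : ℝ) * r ^ (n - 1) * 1) := by
    rw [abs_mul, abs_mul, abs_mul, abs_neg, abs_pow, e1]
    apply mul_le_mul (hC n) _ (by positivity) hC0.le
    apply mul_le_mul _ (le_trans hs hr1.le) (abs_nonneg _) (by positivity)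
    exact mul_le_mul_of_nonneg_left hp2 (by positivity)
  have htri : ‖g2F x n θ‖ ≤ |aCoef x n * ((((2 * n : ℕ) : ℝ) * (((2 * n - 1 : ℕ) : ℝ) *
      Real.sin θ ^ (2 * n - 1 - 1) * Real.cos θ)) * Real.cos θ)| +
      |aCoef x n * ((((2 * n : ℕ) : ℝ) * Real.sin θ ^ (2 * n - 1)) * (-Real.sin θ))| := by
    simp only [g2F, Real.norm_eq_abs, mul_add]
    exact abs_add_le _ _
  have hrn : 0 ≤ r ^ n := by positivity
  have hn' : (0:ℝ) ≤ (n:ℝ) := Nat.cast_nonneg n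
  have hsum := le_trans htri (add_le_add hterm1 hterm2)
  have : C * (2 * (n : ℝ) * ((2 * (n : ℝ)) * r ^ (n - 1) * 1) * 1) +
      C * (2 * (n : ℝ) * r ^ (n - 1) * 1) = (4 * C * (n:ℝ)^2 + 2 * C * (n:ℝ)) * (r ^ n / r) := by
    rw [← hrw]; ring
  rw [this] at hsum
  refine hsum.trans ?_
  have key1 : (4 * C * (n:ℝ)^2 + 2 * C * (n:ℝ)) * (r ^ n / r)
      = ((4 * C * (n:ℝ)^2 + 2 * C * (n:ℝ)) * r ^ n) / r := by ring
  have key2 : 8 * C / r * ((n:ℝ) + 1) ^ 2 * r ^ n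
      = (8 * C * ((n:ℝ) + 1) ^ 2 * r ^ n) / r := by ring
  rw [key1, key2, div_le_div_iff₀ hr0 hr0]
  nlinarith [mul_nonneg (mul_nonneg hC0.le hn') hrn, mul_nonneg hC0.le hrn,
    mul_nonneg (mul_nonneg (mul_nonneg hC0.le hn') hn') hrn,
    mul_nonneg hr0.le (mul_nonneg (mul_nonneg hC0.le hn') hrn),
    mul_nonneg hr0.le (mul_nonneg hC0.le hrn),
    mul_nonneg hr0.le (mul_nonneg (mul_nonneg (mul_nonneg hC0.le hn') hn') hrn)]

lemma g2F_split (x : ℝ) (n : ℕ) (θ : ℝ) :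
    g2F x n θ = aCoef x n * (2 * (n : ℝ)) * (2 * (n : ℝ) - 1) * Real.sin θ ^ (2 * n - 2) -
      aCoef x n * (2 * (n : ℝ)) ^ 2 * Real.sin θ ^ (2 * n) := by
  rcases Nat.eq_zero_or_pos n with hn | hn
  · subst hn; simp [g2F]
  obtain ⟨m, rfl⟩ := Nat.exists_eq_add_of_le hn
  have e1 : 2 * (1 + m) - 1 = 2 * m + 1 := by omega
  have e2 : 2 * (1 + m) - 1 - 1 = 2 * m := by omega
  have e3 : 2 * (1 + m) - 2 = 2 * m := by omega
  have e4 : 2 * (1 + m) = 2 * m + 2 := by omega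
  have hc2 : Real.cos θ ^ 2 = 1 - Real.sin θ ^ 2 := by
    have := Real.sin_sq_add_cos_sq θ
    linarith
  simp only [g2F, e1, e2, e3, e4]
  push_cast
  have expand : aCoef x (1 + m) * (((2 * (m:ℝ) + 2) * ((2 * (m:ℝ) + 1) *
      Real.sin θ ^ (2 * m) * Real.cos θ)) * Real.cos θ +
      ((2 * (m:ℝ) + 2) * Real.sin θ ^ (2 * m + 1)) * (-Real.sin θ)) =
      aCoef x (1 + m) * (2 * (m:ℝ) + 2) * (2 * (m:ℝ) + 1) * Real.sin θ ^ (2 * m) *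
        (Real.cos θ ^ 2) -
      aCoef x (1 + m) * (2 * (m:ℝ) + 2) * (Real.sin θ ^ (2 * m) * Real.sin θ ^ 2) := by
    ring
  rw [expand, hc2]
  ring

theorem hasSum_cos_arcsin (x : ℝ) {u : ℝ} (hu : |u| < 1) :
    HasSum (fun n => aCoef x n * u ^ (2 * n)) (Real.cos (2 * x * Real.arcsin u)) := by
  by_cases hx : x = 0
  · subst hx
    have h0 : ∀ n : ℕ, n ≠ 0 → aCoef 0 n * u ^ (2 * n) = 0 := by
      intro n hn
      have hprod : (∏ j ∈ Finset.range n, ((j : ℝ) ^ 2 - 0 ^ 2)) = 0 := by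
        apply Finset.prod_eq_zero (Finset.mem_range.2 (Nat.pos_of_ne_zero hn))
        norm_num
      have hz : aCoef 0 n = 0 := by
        unfold aCoef; rw [hprod, zero_mul, zero_div]
      rw [hz, zero_mul]
    have h := hasSum_single (f := fun n => aCoef 0 n * u ^ (2 * n)) 0 (fun b hb => h0 b hb)
    simp only [aCoef_zero, Nat.mul_zero, pow_zero, mul_one] at h
    simpa using h
  obtain ⟨C, hC0, hC⟩ := aCoef_bound x
  have hpi : (0:ℝ) < π := Real.pi_pos
  have h1 : Real.arcsin |u| < π / 2 := Real.arcsin_lt_pi_div_two.2 hu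
  have h0 : 0 ≤ Real.arcsin |u| := Real.arcsin_nonneg.2 (abs_nonneg u)
  set A := (Real.arcsin |u| + π / 2) / 2 with hA
  have hA1 : Real.arcsin |u| < A := by rw [hA]; linarith
  have hA2 : A < π / 2 := by rw [hA]; linarith
  have hA0 : 0 < A := lt_of_le_of_lt h0 hA1
  have hr1 : Real.sin A < 1 := by
    have := Real.sin_lt_sin_of_lt_of_le_pi_div_two (x := A) (y := π / 2)
      (by linarith) (le_refl _) hA2
    rwa [Real.sin_pi_div_two] at this
  have hr0 : 0 < Real.sin A := Real.sin_pos_of_pos_of_lt_pi hA0 (by linarith)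
  have hsin : ∀ θ ∈ Set.Ioo (-A) A, |Real.sin θ| ≤ Real.sin A := by
    intro θ hθ
    obtain ⟨hθ1, hθ2⟩ := hθ
    rw [abs_le]
    constructor
    · have h := Real.sin_le_sin_of_le_of_le_pi_div_two (x := -A) (y := θ)
        (by linarith) (by linarith) hθ1.le
      rw [Real.sin_neg] at h
      linarith
    · exact Real.sin_le_sin_of_le_of_le_pi_div_two (by linarith) (by linarith) hθ2.le
  have su1 : Summable (fun n : ℕ => 2 * C / Real.sin A * ((n : ℝ) + 1) * Real.sin A ^ n) := by
    have h1 := summable_pow_mul_geo (Real.sin A) hr0.le hr1 (2 * C / Real.sin A) 1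
    have h2 := summable_pow_mul_geo (Real.sin A) hr0.le hr1 (2 * C / Real.sin A) 0
    apply (h1.add h2).congr
    intro n; simp; ring
  have su2 : Summable (fun n : ℕ => 8 * C / Real.sin A * ((n : ℝ) + 1) ^ 2 * Real.sin A ^ n) := by
    have h1 := summable_pow_mul_geo (Real.sin A) hr0.le hr1 (8 * C / Real.sin A) 2
    have h2 := summable_pow_mul_geo (Real.sin A) hr0.le hr1 (16 * C / Real.sin A) 1
    have h3 := summable_pow_mul_geo (Real.sin A) hr0.le hr1 (8 * C / Real.sin A) 0
    apply ((h1.add h2).add h3).congr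
    intro n; simp; ring
  have hg0sum : Summable (fun n => gF x n 0) := by
    apply summable_of_ne_finset_zero (s := {0})
    intro n hn
    have hn' : n ≠ 0 := by simpa using hn
    simp [gF, Real.sin_zero, zero_pow (by omega : 2 * n ≠ 0)]
  have hg1sum : Summable (fun n => g1F x n 0) := by
    apply summable_of_ne_finset_zero (s := (∅ : Finset ℕ))
    intro n _
    rcases Nat.eq_zero_or_pos n with hn | hn
    · subst hn; simp [g1F]
    · simp [g1F, Real.sin_zero, zero_pow (by omega : 2 * n - 1 ≠ 0)]
  have hopen : IsOpen (Set.Ioo (-A) A) := isOpen_Ioo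
  have hconn : IsPreconnected (Set.Ioo (-A) A) := isPreconnected_Ioo
  have h0t : (0:ℝ) ∈ Set.Ioo (-A) A := ⟨by linarith, hA0⟩
  have hDH : ∀ θ ∈ Set.Ioo (-A) A,
      HasDerivAt (fun z => ∑' n, gF x n z) (∑' n, g1F x n θ) θ := by
    intro θ hθ
    exact hasDerivAt_tsum_of_isPreconnected su1 hopen hconn
      (fun n y _ => gF_hasDeriv x n y)
      (fun n y hy => norm_g1F_le hC0 hC hr0 hr1 (hsin y hy) n) h0t hg0sum hθ
  have hDH1 : ∀ θ ∈ Set.Ioo (-A) A,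
      HasDerivAt (fun z => ∑' n, g1F x n z) (∑' n, g2F x n θ) θ := by
    intro θ hθ
    exact hasDerivAt_tsum_of_isPreconnected su2 hopen hconn
      (fun n y _ => g1F_hasDeriv x n y)
      (fun n y hy => norm_g2F_le hC0 hC hr0 hr1 (hsin y hy) n) h0t hg1sum hθ
  -- the ODE
  have hODE : ∀ θ ∈ Set.Ioo (-A) A,
      (∑' n, g2F x n θ) = -(4 * x ^ 2) * ∑' n, gF x n θ := by
    intro θ hθ
    have hsr : |Real.sin θ| ≤ Real.sin A := hsin θ hθ
    have hr2 : Real.sin A ^ 2 < 1 := by nlinarith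
    have hsum_geo : ∀ (c : ℝ) (k : ℕ),
        Summable (fun n : ℕ => c * (n : ℝ) ^ k * (Real.sin A ^ 2) ^ n) :=
      fun c k => summable_pow_mul_geo (Real.sin A ^ 2) (by positivity) hr2 c k
    have hspow : ∀ n : ℕ, |Real.sin θ ^ (2 * n)| ≤ (Real.sin A ^ 2) ^ n := by
      intro n
      rw [abs_pow]
      calc |Real.sin θ| ^ (2 * n) = (|Real.sin θ| ^ 2) ^ n := by rw [← pow_mul]
        _ ≤ (Real.sin A ^ 2) ^ n := by
            apply pow_le_pow_left₀ (by positivity) _ n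
            nlinarith [abs_nonneg (Real.sin θ), sq_abs (Real.sin θ)]
    have hEeq : ∀ n : ℕ, aCoef x (n + 1) * (2 * ((n:ℝ) + 1)) * (2 * ((n:ℝ) + 1) - 1) *
        Real.sin θ ^ (2 * (n + 1) - 2)
        = 4 * ((n : ℝ) ^ 2 - x ^ 2) * aCoef x n * Real.sin θ ^ (2 * n) := by
      intro n
      have e3 : 2 * (n + 1) - 2 = 2 * n := by omega
      rw [e3]
      have h := aCoef_succ x n
      calc aCoef x (n + 1) * (2 * ((n:ℝ) + 1)) * (2 * ((n:ℝ) + 1) - 1) * Real.sin θ ^ (2 * n)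
          = (aCoef x (n + 1) * ((2 * (n : ℝ) + 2) * (2 * (n:ℝ) + 1))) *
              Real.sin θ ^ (2 * n) := by ring
        _ = (4 * ((n : ℝ) ^ 2 - x ^ 2) * aCoef x n) * Real.sin θ ^ (2 * n) := by rw [h]
        _ = 4 * ((n : ℝ) ^ 2 - x ^ 2) * aCoef x n * Real.sin θ ^ (2 * n) := by ring
    have habs4 : ∀ n : ℕ, |4 * ((n:ℝ) ^ 2 - x ^ 2)| ≤ 4 * ((n:ℝ) ^ 2 + x ^ 2) := by
      intro n
      rw [abs_mul, abs_of_nonneg (by norm_num : (0:ℝ) ≤ 4)]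
      have : |(n:ℝ) ^ 2 - x ^ 2| ≤ (n:ℝ) ^ 2 + x ^ 2 := by
        rw [abs_le]; constructor <;> nlinarith [sq_nonneg (n:ℝ), sq_nonneg x]
      linarith
    have hSE : Summable (fun n : ℕ =>
        4 * ((n : ℝ) ^ 2 - x ^ 2) * aCoef x n * Real.sin θ ^ (2 * n)) := by
      apply Summable.of_norm_bounded ((hsum_geo (4 * C) 2).add (hsum_geo (4 * C * x ^ 2) 0))
      intro n
      simp only [Real.norm_eq_abs]
      rw [abs_mul, abs_mul]
      calc |4 * ((n:ℝ) ^ 2 - x ^ 2)| * |aCoef x n| * |Real.sin θ ^ (2 * n)|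
          ≤ (4 * ((n:ℝ) ^ 2 + x ^ 2)) * C * (Real.sin A ^ 2) ^ n := by
            apply mul_le_mul _ (hspow n) (abs_nonneg _) (by positivity)
            exact mul_le_mul (habs4 n) (hC n) (abs_nonneg _) (by positivity)
        _ = 4 * C * (n:ℝ) ^ 2 * (Real.sin A ^ 2) ^ n +
              4 * C * x ^ 2 * (n:ℝ) ^ 0 * (Real.sin A ^ 2) ^ n := by
            simp only [pow_zero, mul_one]; ring
    have hSB : Summable (fun n : ℕ =>
        aCoef x n * (2 * (n : ℝ)) ^ 2 * Real.sin θ ^ (2 * n)) := by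
      apply Summable.of_norm_bounded (hsum_geo (4 * C) 2)
      intro n
      simp only [Real.norm_eq_abs]
      rw [abs_mul, abs_mul]
      calc |aCoef x n| * |(2 * (n : ℝ)) ^ 2| * |Real.sin θ ^ (2 * n)|
          ≤ C * (4 * (n:ℝ) ^ 2) * (Real.sin A ^ 2) ^ n := by
            apply mul_le_mul _ (hspow n) (abs_nonneg _) (by positivity)
            apply mul_le_mul (hC n) _ (abs_nonneg _) hC0.le
            rw [abs_of_nonneg (by positivity)]
            nlinarith [sq_nonneg (n:ℝ)]
        _ = 4 * C * (n:ℝ) ^ 2 * (Real.sin A ^ 2) ^ n := by ring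
    have hSA : Summable (fun n : ℕ =>
        aCoef x n * (2 * (n : ℝ)) * (2 * (n : ℝ) - 1) * Real.sin θ ^ (2 * n - 2)) := by
      rw [← summable_nat_add_iff 1]
      apply hSE.congr
      intro n
      have := hEeq n
      push_cast at this ⊢
      linarith [this]
    have hSg : Summable (fun n => gF x n θ) := by
      apply Summable.of_norm_bounded (hsum_geo C 0)
      intro n
      simp only [gF, Real.norm_eq_abs, abs_mul]
      calc |aCoef x n| * |Real.sin θ ^ (2 * n)| ≤ C * (Real.sin A ^ 2) ^ n :=
            mul_le_mul (hC n) (hspow n) (abs_nonneg _) hC0.le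
        _ = C * (n:ℝ) ^ 0 * (Real.sin A ^ 2) ^ n := by
            simp only [pow_zero, mul_one]
    have hA'0 : aCoef x 0 * (2 * ((0:ℕ) : ℝ)) * (2 * ((0:ℕ) : ℝ) - 1) *
        Real.sin θ ^ (2 * 0 - 2) = 0 := by norm_num
    calc (∑' n, g2F x n θ)
        = ∑' n, (aCoef x n * (2 * (n : ℝ)) * (2 * (n : ℝ) - 1) * Real.sin θ ^ (2 * n - 2) -
            aCoef x n * (2 * (n : ℝ)) ^ 2 * Real.sin θ ^ (2 * n)) :=
          tsum_congr (fun n => g2F_split x n θ)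
      _ = (∑' n, aCoef x n * (2 * (n : ℝ)) * (2 * (n : ℝ) - 1) * Real.sin θ ^ (2 * n - 2)) -
            ∑' n, aCoef x n * (2 * (n : ℝ)) ^ 2 * Real.sin θ ^ (2 * n) := Summable.tsum_sub hSA hSB
      _ = (∑' (n : ℕ), 4 * ((n : ℝ) ^ 2 - x ^ 2) * aCoef x n * Real.sin θ ^ (2 * n)) -
            ∑' n, aCoef x n * (2 * (n : ℝ)) ^ 2 * Real.sin θ ^ (2 * n) := by
          congr 1
          rw [Summable.tsum_eq_zero_add hSA]
          have h00 : aCoef x 0 * (2 * ((0:ℕ) : ℝ)) * (2 * ((0:ℕ) : ℝ) - 1) *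
              Real.sin θ ^ (2 * 0 - 2) = 0 := by norm_num
          rw [h00, zero_add]
          apply tsum_congr
          intro n
          have h := hEeq n
          push_cast at h ⊢
          linarith [h]
      _ = ∑' (n : ℕ), (4 * ((n : ℝ) ^ 2 - x ^ 2) * aCoef x n * Real.sin θ ^ (2 * n) -
            aCoef x n * (2 * (n : ℝ)) ^ 2 * Real.sin θ ^ (2 * n)) := (Summable.tsum_sub hSE hSB).symm
      _ = ∑' n, (-(4 * x ^ 2) * gF x n θ) := by
          apply tsum_congr
          intro n
          simp only [gF]
          ring
      _ = -(4 * x ^ 2) * ∑' n, gF x n θ := tsum_mul_left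
  -- constancy helper
  have hconst : ∀ f : ℝ → ℝ, (∀ y ∈ Set.Ioo (-A) A, HasDerivAt f 0 y) →
      ∀ θ ∈ Set.Ioo (-A) A, f θ = f 0 := by
    intro f hf θ hθ
    have hb := (convex_Ioo (-A) A).norm_image_sub_le_of_norm_hasDerivWithin_le
      (C := (0:ℝ)) (f' := fun _ => (0:ℝ)) (fun y hy => (hf y hy).hasDerivWithinAt)
      (fun y _ => by simp) h0t hθ
    rw [zero_mul] at hb
    have := norm_eq_zero.1 (le_antisymm hb (norm_nonneg _))
    exact sub_eq_zero.1 this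
  have hlin : ∀ θ : ℝ, HasDerivAt (fun y : ℝ => 2 * x * y) (2 * x) θ := by
    intro θ
    simpa using (hasDerivAt_id θ).const_mul (2 * x)
  have hDF1 : ∀ θ ∈ Set.Ioo (-A) A, HasDerivAt (fun θ =>
      (∑' n, g1F x n θ) * Real.cos (2 * x * θ) +
        (2 * x * ∑' n, gF x n θ) * Real.sin (2 * x * θ)) 0 θ := by
    intro θ hθ
    have h := ((hDH1 θ hθ).mul ((hlin θ).cos)).add
      ((((hDH θ hθ).const_mul (2 * x)).mul ((hlin θ).sin)))
    have e : (∑' n, g2F x n θ) * Real.cos (2 * x * θ) +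
        (∑' n, g1F x n θ) * (-Real.sin (2 * x * θ) * (2 * x)) +
        (2 * x * (∑' n, g1F x n θ) * Real.sin (2 * x * θ) +
          2 * x * (∑' n, gF x n θ) * (Real.cos (2 * x * θ) * (2 * x))) = 0 := by
      rw [hODE θ hθ]
      ring
    rw [← e]
    exact h
  have hDF2 : ∀ θ ∈ Set.Ioo (-A) A, HasDerivAt (fun θ =>
      (∑' n, g1F x n θ) * Real.sin (2 * x * θ) -
        (2 * x * ∑' n, gF x n θ) * Real.cos (2 * x * θ)) 0 θ := by
    intro θ hθ
    have h := ((hDH1 θ hθ).mul ((hlin θ).sin)).sub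
      ((((hDH θ hθ).const_mul (2 * x)).mul ((hlin θ).cos)))
    have e : (∑' n, g2F x n θ) * Real.sin (2 * x * θ) +
        (∑' n, g1F x n θ) * (Real.cos (2 * x * θ) * (2 * x)) -
        (2 * x * (∑' n, g1F x n θ) * Real.cos (2 * x * θ) +
          2 * x * (∑' n, gF x n θ) * (-Real.sin (2 * x * θ) * (2 * x))) = 0 := by
      rw [hODE θ hθ]
      ring
    rw [← e]
    exact h
  have hH0 : (∑' n, gF x n 0) = 1 := by
    have h := tsum_eq_single (L := SummationFilter.unconditional ℕ) (f := fun n => gF x n 0) 0 (by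
      intro n hn
      simp [gF, Real.sin_zero, zero_pow (by omega : 2 * n ≠ 0)])
    rw [h]
    simp [gF, aCoef_zero]
  have hH10 : (∑' n, g1F x n 0) = 0 := by
    have h : ∀ n : ℕ, g1F x n 0 = 0 := by
      intro n
      rcases Nat.eq_zero_or_pos n with hn | hn
      · subst hn; simp [g1F]
      · simp [g1F, Real.sin_zero, zero_pow (by omega : 2 * n - 1 ≠ 0)]
    rw [tsum_congr h]
    simp
  have eq1 : ∀ θ ∈ Set.Ioo (-A) A, (∑' n, g1F x n θ) * Real.cos (2 * x * θ) +
      (2 * x * ∑' n, gF x n θ) * Real.sin (2 * x * θ) = 0 := by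
    intro θ hθ
    have h := hconst _ hDF1 θ hθ
    rw [h]
    simp [hH10]
  have eq2 : ∀ θ ∈ Set.Ioo (-A) A, (∑' n, g1F x n θ) * Real.sin (2 * x * θ) -
      (2 * x * ∑' n, gF x n θ) * Real.cos (2 * x * θ) = -(2 * x) := by
    intro θ hθ
    have h := hconst _ hDF2 θ hθ
    rw [h]
    simp [hH0, hH10]
  have hHcos : ∀ θ ∈ Set.Ioo (-A) A, (∑' n, gF x n θ) = Real.cos (2 * x * θ) := by
    intro θ hθ
    have e1 := eq1 θ hθ
    have e2 := eq2 θ hθ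
    have hsc := Real.sin_sq_add_cos_sq (2 * x * θ)
    have hx2 : (2 * x) ≠ 0 := by
      intro h; exact hx (by linarith)
    apply mul_left_cancel₀ hx2
    linear_combination Real.sin (2 * x * θ) * e1 - Real.cos (2 * x * θ) * e2 -
      2 * x * (∑' n, gF x n θ) * hsc
  have hu1' : -1 ≤ u := neg_le_of_abs_le hu.le
  have hu2' : u ≤ 1 := le_of_abs_le hu.le
  have habs : |Real.arcsin u| = Real.arcsin |u| := by
    rcases le_or_gt 0 u with h | h
    · rw [abs_of_nonneg h, abs_of_nonneg (Real.arcsin_nonneg.2 h)]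
    · rw [abs_of_neg h, abs_of_neg (Real.arcsin_lt_zero.2 h), Real.arcsin_neg]
  have hθt : Real.arcsin u ∈ Set.Ioo (-A) A := by
    have hlt : |Real.arcsin u| < A := by rw [habs]; exact hA1
    obtain ⟨h1', h2'⟩ := abs_lt.1 hlt
    exact ⟨h1', h2'⟩
  have hval := hHcos (Real.arcsin u) hθt
  have hsin_arcsin : Real.sin (Real.arcsin u) = u := Real.sin_arcsin hu1' hu2'
  have hHval : (∑' n, gF x n (Real.arcsin u)) = ∑' n, aCoef x n * u ^ (2 * n) := by
    apply tsum_congr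
    intro n
    simp [gF, hsin_arcsin]
  have hsummable : Summable (fun n => aCoef x n * u ^ (2 * n)) := by
    have hu2lt : u ^ 2 < 1 := by nlinarith [abs_nonneg u, sq_abs u]
    apply Summable.of_norm_bounded (summable_pow_mul_geo (u ^ 2) (by positivity) hu2lt C 0)
    intro n
    simp only [Real.norm_eq_abs, abs_mul]
    calc |aCoef x n| * |u ^ (2 * n)| ≤ C * (u ^ 2) ^ n := by
          apply mul_le_mul (hC n) _ (abs_nonneg _) hC0.le
          rw [abs_pow]
          exact le_of_eq (by rw [pow_mul, sq_abs])
      _ = C * (n:ℝ) ^ 0 * (u ^ 2) ^ n := by norm_num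
  rw [Summable.hasSum_iff hsummable]
  rw [← hHval, hval]

lemma prod_odd_even (n : ℕ) :
    ∏ i ∈ Finset.range n, (2 * (i:ℝ) + 1) / (2 * (i:ℝ) + 2)
      = ((2 * n).factorial : ℝ) / (4 ^ n * ((n.factorial : ℝ)) ^ 2) := by
  induction n with
  | zero => simp
  | succ n ih =>
    rw [Finset.prod_range_succ, ih, two_succ_factorial]
    have h1 : (((n+1).factorial : ℕ) : ℝ) = ((n:ℝ)+1) * (n.factorial : ℝ) := by
      rw [Nat.factorial_succ]; push_cast; ring
    rw [h1]
    have h2 : ((2*n).factorial : ℝ) ≠ 0 := Nat.cast_ne_zero.2 (Nat.factorial_ne_zero _)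
    have h3 : ((n.factorial : ℕ) : ℝ) ≠ 0 := Nat.cast_ne_zero.2 (Nat.factorial_ne_zero _)
    have h4 : (2*(n:ℝ)+2) ≠ 0 := by positivity
    have h5 : (4:ℝ)^n ≠ 0 := by positivity
    field_simp
    ring

lemma integral_sin_pow_even_half (n : ℕ) :
    ∫ θ in (0:ℝ)..(π/2), Real.sin θ ^ (2*n)
      = π / 2 * ∏ i ∈ Finset.range n, (2 * (i:ℝ) + 1) / (2 * (i:ℝ) + 2) := by
  have hpi : (0:ℝ) < π := Real.pi_pos
  have hc : Continuous (fun θ : ℝ => Real.sin θ ^ (2*n)) := Real.continuous_sin.pow _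
  have h2 : ∫ θ in (π/2)..π, Real.sin θ ^ (2*n) = ∫ θ in (0:ℝ)..(π/2), Real.sin θ ^ (2*n) := by
    have h := intervalIntegral.integral_comp_sub_left (a := (0:ℝ)) (b := π/2)
      (fun θ => Real.sin θ ^ (2*n)) π
    simp only [Real.sin_pi_sub] at h
    have e1 : π - π/2 = π/2 := by ring
    rw [e1, sub_zero] at h
    exact h.symm
  have h3 := intervalIntegral.integral_add_adjacent_intervals
    (a := (0:ℝ)) (b := π/2) (c := π)
    (hc.intervalIntegrable (μ := MeasureTheory.volume) _ _)
    (hc.intervalIntegrable (μ := MeasureTheory.volume) _ _)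
  rw [integral_sin_pow_even, h2] at h3
  linarith

lemma integral_subst (b x : ℝ) (hb : 1 < b) :
    (∫ t in (0:ℝ)..1, Real.cos (2 * x * Real.arcsin (t / b)) / Real.sqrt (1 - t ^ 2))
      = ∫ θ in (0:ℝ)..(π/2), Real.cos (2 * x * Real.arcsin (Real.sin θ / b)) := by
  have hpi : (0:ℝ) < π := Real.pi_pos
  have hb0 : (0:ℝ) < b := by linarith
  have hgm : Measurable (fun t : ℝ =>
      Real.cos (2 * x * Real.arcsin (t / b)) / Real.sqrt (1 - t ^ 2)) := by
    apply Measurable.div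
    · exact (Real.continuous_cos.comp (continuous_const.mul
        (Real.continuous_arcsin.comp (continuous_id.div_const b)))).measurable
    · exact (Real.continuous_sqrt.comp (continuous_const.sub (continuous_pow 2))).measurable
  have hmin : min (0:ℝ) (π/2) = 0 := min_eq_left (by linarith)
  have hmax : max (0:ℝ) (π/2) = π/2 := max_eq_right (by linarith)
  have huIcc : Set.uIcc (0:ℝ) (π/2) = Set.Icc 0 (π/2) := Set.uIcc_of_le (by linarith)
  have hsub1 : Real.sin '' Set.Ioo (min (0:ℝ) (π/2)) (max (0:ℝ) (π/2)) ⊆ Set.Ioo (-1:ℝ) 1 := by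
    rw [hmin, hmax]
    rintro _ ⟨θ, hθ, rfl⟩
    constructor
    · have := Real.sin_pos_of_pos_of_lt_pi hθ.1 (by linarith [hθ.2])
      linarith
    · have := Real.sin_lt_sin_of_lt_of_le_pi_div_two (x := θ) (y := π/2)
        (by linarith [hθ.1]) le_rfl hθ.2
      rwa [Real.sin_pi_div_two] at this
  have hsub2 : Real.sin '' Set.uIcc (0:ℝ) (π/2) ⊆ Set.Icc (0:ℝ) 1 := by
    rw [huIcc]
    rintro _ ⟨θ, hθ, rfl⟩
    exact ⟨Real.sin_nonneg_of_nonneg_of_le_pi hθ.1 (by linarith [hθ.2]), Real.sin_le_one θ⟩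
  have hg_cont : ContinuousOn (fun t : ℝ =>
      Real.cos (2 * x * Real.arcsin (t / b)) / Real.sqrt (1 - t ^ 2))
      (Real.sin '' Set.Ioo (min (0:ℝ) (π/2)) (max (0:ℝ) (π/2))) := by
    apply ContinuousOn.mono _ hsub1
    apply ContinuousOn.div
    · exact (Real.continuous_cos.comp (continuous_const.mul
        (Real.continuous_arcsin.comp (continuous_id.div_const b)))).continuousOn
    · exact (Real.continuous_sqrt.comp (continuous_const.sub (continuous_pow 2))).continuousOn
    · intro t ht
      apply ne_of_gt
      apply Real.sqrt_pos.2
      nlinarith [ht.1, ht.2]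
  have hmaj : IntervalIntegrable (fun t : ℝ => (1 - t) ^ (-(1/2):ℝ))
      MeasureTheory.volume 0 1 := by
    have h := intervalIntegral.intervalIntegrable_rpow' (a := (0:ℝ)) (b := 1) (r := -(1/2))
      (by norm_num)
    have h2 := (h.comp_sub_left 1).symm
    simpa using h2
  have hgint : MeasureTheory.IntegrableOn (fun t : ℝ =>
      Real.cos (2 * x * Real.arcsin (t / b)) / Real.sqrt (1 - t ^ 2))
      (Set.Icc (0:ℝ) 1) := by
    apply MeasureTheory.Integrable.mono'
      ((intervalIntegrable_iff_integrableOn_Icc_of_le (by norm_num)).1 hmaj)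
      hgm.aestronglyMeasurable
    rw [MeasureTheory.ae_restrict_iff' measurableSet_Icc]
    filter_upwards with t ht
    obtain ⟨ht0, ht1⟩ := ht
    rcases eq_or_lt_of_le ht1 with h1 | h1
    · subst h1
      have e : (1:ℝ) - (1:ℝ)^2 = 0 := by norm_num
      rw [e, Real.sqrt_zero, div_zero, norm_zero, sub_self,
        Real.zero_rpow (by norm_num : (-(1/2):ℝ) ≠ 0)]
    · have hden : 0 < Real.sqrt (1 - t^2) := Real.sqrt_pos.2 (by nlinarith)
      have hden2 : 0 < Real.sqrt (1 - t) := Real.sqrt_pos.2 (by linarith)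
      have hle : Real.sqrt (1 - t) ≤ Real.sqrt (1 - t^2) := Real.sqrt_le_sqrt (by nlinarith)
      have hrw : ((1:ℝ) - t) ^ (-(1/2):ℝ) = 1 / Real.sqrt (1 - t) := by
        rw [Real.rpow_neg (by linarith), Real.sqrt_eq_rpow]
        exact (one_div _).symm
      rw [Real.norm_eq_abs, abs_div, abs_of_nonneg (Real.sqrt_nonneg _), hrw]
      calc |Real.cos (2 * x * Real.arcsin (t / b))| / Real.sqrt (1 - t^2)
          ≤ 1 / Real.sqrt (1 - t^2) := by
            gcongr
            exact Real.abs_cos_le_one _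
        _ ≤ 1 / Real.sqrt (1 - t) := by gcongr
  have hg1 : MeasureTheory.IntegrableOn (fun t : ℝ =>
      Real.cos (2 * x * Real.arcsin (t / b)) / Real.sqrt (1 - t ^ 2))
      (Real.sin '' Set.uIcc (0:ℝ) (π/2)) := hgint.mono_set hsub2
  have hcomp : MeasureTheory.IntegrableOn (fun θ : ℝ => Real.cos θ •
      ((fun t : ℝ => Real.cos (2 * x * Real.arcsin (t / b)) / Real.sqrt (1 - t ^ 2)) ∘ Real.sin) θ)
      (Set.uIcc (0:ℝ) (π/2)) := by
    apply MeasureTheory.Measure.integrableOn_of_bounded (M := 1)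
    · rw [huIcc, Real.volume_Icc]
      exact ENNReal.ofReal_ne_top
    · apply Measurable.aestronglyMeasurable
      simp only [smul_eq_mul, Function.comp]
      exact Real.measurable_cos.mul (hgm.comp Real.measurable_sin)
    · filter_upwards with θ
      simp only [smul_eq_mul, Function.comp]
      have h1 : (1:ℝ) - Real.sin θ^2 = Real.cos θ^2 := by
        nlinarith [Real.sin_sq_add_cos_sq θ]
      rw [h1, Real.sqrt_sq_eq_abs]
      rcases eq_or_ne (Real.cos θ) 0 with hc | hc
      · rw [hc]
        norm_num
      · have habs : |Real.cos θ| ≠ 0 := abs_ne_zero.2 hc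
        rw [Real.norm_eq_abs, abs_mul, abs_div, abs_abs]
        have he : |Real.cos θ| * (|Real.cos (2 * x * Real.arcsin (Real.sin θ / b))| /
            |Real.cos θ|) = |Real.cos (2 * x * Real.arcsin (Real.sin θ / b))| := by
          field_simp
        rw [he]
        exact Real.abs_cos_le_one _
  have key := intervalIntegral.integral_comp_smul_deriv''' (a := (0:ℝ)) (b := π/2)
    (f := Real.sin) (f' := Real.cos)
    (g := fun t : ℝ => Real.cos (2 * x * Real.arcsin (t / b)) / Real.sqrt (1 - t ^ 2))
    Real.continuous_sin.continuousOn
    (fun θ _ => (Real.hasDerivAt_sin θ).hasDerivWithinAt)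
    hg_cont hg1 hcomp
  rw [Real.sin_zero, Real.sin_pi_div_two] at key
  rw [← key]
  apply intervalIntegral.integral_congr_ae
  have hae : ∀ᵐ θ : ℝ, θ ≠ π/2 := by
    have h : MeasureTheory.volume ({π/2} : Set ℝ) = 0 := MeasureTheory.measure_singleton _
    have h2 := MeasureTheory.measure_eq_zero_iff_ae_notMem.1 h
    simpa using h2
  filter_upwards [hae] with θ hθne hθI
  have hθI' : θ ∈ Set.Ioc 0 (π/2) := by
    rwa [Set.uIoc_of_le (by linarith : (0:ℝ) ≤ π/2)] at hθI
  have hθlt : θ < π/2 := lt_of_le_of_ne hθI'.2 hθne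
  have hcos : 0 < Real.cos θ := Real.cos_pos_of_mem_Ioo ⟨by linarith [hθI'.1], hθlt⟩
  have h1 : (1:ℝ) - Real.sin θ^2 = Real.cos θ^2 := by nlinarith [Real.sin_sq_add_cos_sq θ]
  simp only [smul_eq_mul, Function.comp]
  rw [h1, Real.sqrt_sq hcos.le, mul_comm, div_mul_cancel₀ _ hcos.ne']

theorem I_b_two_x_series (b : ℝ) (hb : 1 < b) (x : ℝ) :
    HasSum
      (fun n : ℕ =>
        (∏ j ∈ Finset.range (n + 1), ((j : ℝ) ^ 2 - x ^ 2)) /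
          (b ^ (2 * (n + 1)) * ((n + 1).factorial : ℝ) ^ 2))
      (((2 / π) * ∫ t in (0:ℝ)..1,
          Real.cos (2 * x * Real.arcsin (t / b)) / Real.sqrt (1 - t ^ 2)) - 1) := by
  have hpi : (0:ℝ) < π := Real.pi_pos
  have hb0 : (0:ℝ) < b := by linarith
  obtain ⟨C, hC0, hC⟩ := aCoef_bound x
  have hq0 : (0:ℝ) ≤ 1 / b^2 := by positivity
  have hq1 : 1 / b^2 < 1 := by
    rw [div_lt_one (by positivity)]
    nlinarith
  have hsum0 : HasSum (fun n : ℕ => ∫ θ in (0:ℝ)..(π/2), aCoef x n * (Real.sin θ / b) ^ (2*n))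
      (∫ θ in (0:ℝ)..(π/2), Real.cos (2 * x * Real.arcsin (Real.sin θ / b))) := by
    apply intervalIntegral.hasSum_integral_of_dominated_convergence
      (bound := fun n _ => C * (1 / b^2)^n)
    · intro n
      apply Continuous.aestronglyMeasurable
      exact continuous_const.mul ((Real.continuous_sin.div_const b).pow _)
    · intro n
      filter_upwards with θ _
      rw [Real.norm_eq_abs, abs_mul]
      have h1 : |(Real.sin θ / b) ^ (2*n)| ≤ (1/b^2)^n := by
        rw [abs_pow]
        calc |Real.sin θ / b| ^ (2*n) = (|Real.sin θ / b|^2) ^ n := by rw [← pow_mul]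
          _ ≤ (1/b^2)^n := by
              apply pow_le_pow_left₀ (by positivity) _ n
              rw [abs_div, abs_of_pos hb0, div_pow, sq_abs]
              rw [div_le_div_iff₀ (by positivity) (by positivity)]
              nlinarith [Real.sin_sq_le_one θ]
      exact mul_le_mul (hC n) h1 (abs_nonneg _) hC0.le
    · filter_upwards with θ _
      exact (summable_geometric_of_lt_one hq0 hq1).mul_left C
    · exact continuous_const.intervalIntegrable _ _
    · filter_upwards with θ _
      have habs : |Real.sin θ / b| < 1 := by
        rw [abs_div, abs_of_pos hb0, div_lt_one hb0]
        have h1 : |Real.sin θ| ≤ 1 := abs_le.2 ⟨Real.neg_one_le_sin θ, Real.sin_le_one θ⟩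
        linarith
      exact hasSum_cos_arcsin x habs
  have hint_eq : ∀ n : ℕ, (∫ θ in (0:ℝ)..(π/2), aCoef x n * (Real.sin θ / b) ^ (2*n))
      = aCoef x n / b^(2*n) *
          (π/2 * ∏ i ∈ Finset.range n, (2*(i:ℝ)+1)/(2*(i:ℝ)+2)) := by
    intro n
    have h1 : (fun θ => aCoef x n * (Real.sin θ / b) ^ (2*n))
        = fun θ => (aCoef x n / b^(2*n)) * Real.sin θ ^ (2*n) := by
      funext θ
      rw [div_pow]
      ring
    rw [h1, intervalIntegral.integral_const_mul, integral_sin_pow_even_half]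
  simp only [hint_eq] at hsum0
  have hsum1 := hsum0.mul_left (2/π)
  have hterm : ∀ n : ℕ, (2/π) * (aCoef x n / b^(2*n) *
      (π/2 * ∏ i ∈ Finset.range n, (2*(i:ℝ)+1)/(2*(i:ℝ)+2)))
      = (∏ j ∈ Finset.range n, ((j:ℝ)^2 - x^2)) / (b^(2*n) * ((n.factorial : ℝ))^2) := by
    intro n
    rw [prod_odd_even]
    unfold aCoef
    have hfac1 : ((2*n).factorial : ℝ) ≠ 0 := Nat.cast_ne_zero.2 (Nat.factorial_ne_zero _)
    have hfac2 : ((n.factorial : ℕ) : ℝ) ≠ 0 := Nat.cast_ne_zero.2 (Nat.factorial_ne_zero _)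
    have h4 : (4:ℝ)^n ≠ 0 := by positivity
    have hbn : (b:ℝ)^(2*n) ≠ 0 := by positivity
    have hpi' : (π:ℝ) ≠ 0 := Real.pi_ne_zero
    field_simp
  simp only [hterm] at hsum1
  rw [integral_subst b x hb]
  refine (hasSum_nat_add_iff (f := fun n : ℕ =>
    (∏ j ∈ Finset.range n, ((j:ℝ)^2 - x^2)) / (b^(2*n) * ((n.factorial : ℝ))^2)) 1).2 ?_
  have hval : ((2 / π) * ∫ θ in (0:ℝ)..(π/2),
      Real.cos (2 * x * Real.arcsin (Real.sin θ / b))) - 1 +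
      ∑ i ∈ Finset.range 1,
        (∏ j ∈ Finset.range i, ((j:ℝ)^2 - x^2)) / (b^(2*i) * ((i.factorial : ℝ))^2)
      = (2/π) * ∫ θ in (0:ℝ)..(π/2), Real.cos (2 * x * Real.arcsin (Real.sin θ / b)) := by
    simp
  rw [hval]
  exact hsum1
end

section
/- For all t ∈ [0,1], 0 ≤ arcsin(t) - t ≤ (π/2 - 1) t³. -/
open Real

private lemma aux_hasDeriv (x : ℝ) (hx : x ∈ Set.Ioo (0:ℝ) 1) :
    HasDerivAt (fun y => 2*y/3 + (1/3) * (y / Real.sqrt (1 - y^2)) - Real.arcsin y)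
      ((Real.sqrt (1 - x^2) - 1)^2 * (2 * Real.sqrt (1 - x^2) + 1) / (3 * Real.sqrt (1 - x^2)^3)) x := by
  obtain ⟨hx0, hx1⟩ := hx
  have h1x : (0:ℝ) < 1 - x^2 := by nlinarith
  set s := Real.sqrt (1 - x^2) with hs
  have hspos : 0 < s := Real.sqrt_pos.mpr h1x
  have hs2 : s^2 = 1 - x^2 := Real.sq_sqrt h1x.le
  have hpoly : HasDerivAt (fun y : ℝ => 1 - y^2) (-(2*x)) x := by
    simpa using ((hasDerivAt_pow 2 x).const_sub 1)
  have hsqrt : HasDerivAt (fun y : ℝ => Real.sqrt (1 - y^2)) (-x / s) x := by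
    have := (Real.hasDerivAt_sqrt h1x.ne').comp x hpoly
    refine this.congr_deriv ?_
    field_simp
    ring
  have hq : HasDerivAt (fun y : ℝ => y / Real.sqrt (1 - y^2))
      ((1 * s - x * (-x / s)) / s^2) x :=
    (hasDerivAt_id x).div hsqrt hspos.ne'
  have harc : HasDerivAt Real.arcsin (1 / s) x :=
    Real.hasDerivAt_arcsin (by linarith) hx1.ne
  have hlin : HasDerivAt (fun y : ℝ => 2*y/3) (2*1/3) x :=
    ((hasDerivAt_id x).const_mul (2:ℝ)).div_const 3
  have h := ((hlin.add (hq.const_mul (1/3))).sub harc)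
  refine h.congr_deriv ?_
  rw [show x * (-x / s) = -(x^2/s) by ring, show x^2 = 1 - s^2 by linarith]
  field_simp
  ring

private lemma aux1 (t : ℝ) (h : t ∈ Set.Ico (0:ℝ) 1) :
    3 * (Real.arcsin t - t) ≤ t * (1 / Real.sqrt (1 - t^2) - 1) := by
  obtain ⟨h0, h1⟩ := h
  set U : ℝ → ℝ := fun y => 2*y/3 + (1/3) * (y / Real.sqrt (1 - y^2)) - Real.arcsin y with hU
  have hmono : MonotoneOn U (Set.Ico (0:ℝ) 1) := by
    apply monotoneOn_of_deriv_nonneg (convex_Ico 0 1)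
    · apply ContinuousOn.sub
      · apply ContinuousOn.add
        · fun_prop
        · apply ContinuousOn.mul continuousOn_const
          apply ContinuousOn.div continuousOn_id
          · exact (Real.continuous_sqrt.comp (by fun_prop)).continuousOn
          · intro y hy
            have : (0:ℝ) < 1 - y^2 := by
              obtain ⟨hy0, hy1⟩ := hy; nlinarith
            exact (Real.sqrt_pos.mpr this).ne'
      · exact Real.continuous_arcsin.continuousOn
    · rw [interior_Ico]
      exact fun x hx => (aux_hasDeriv x hx).differentiableAt.differentiableWithinAt
    · rw [interior_Ico]
      intro x hx
      rw [(aux_hasDeriv x hx).deriv]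
      have h1x : (0:ℝ) < 1 - x^2 := by
        obtain ⟨hx0, hx1⟩ := hx; nlinarith
      have hspos : 0 < Real.sqrt (1 - x^2) := Real.sqrt_pos.mpr h1x
      positivity
  have hUt : U 0 ≤ U t := hmono ⟨le_refl 0, one_pos⟩ ⟨h0, h1⟩ h0
  have hU0 : U 0 = 0 := by simp [hU]
  rw [hU0] at hUt
  have h1t : (0:ℝ) < 1 - t^2 := by nlinarith
  have hspos : 0 < Real.sqrt (1 - t^2) := Real.sqrt_pos.mpr h1t
  simp only [hU] at hUt
  have : Real.arcsin t ≤ 2*t/3 + (1/3) * (t / Real.sqrt (1 - t^2)) := by linarith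
  have ht' : t * (1 / Real.sqrt (1 - t^2) - 1) = t / Real.sqrt (1 - t^2) - t := by
    field_simp
  rw [ht']
  linarith

theorem arcsin_sub_self_bound (t : ℝ) (ht : t ∈ Set.Icc (0:ℝ) 1) :
    0 ≤ Real.arcsin t - t ∧ Real.arcsin t - t ≤ (π / 2 - 1) * t ^ 3 := by
  obtain ⟨h0, h1⟩ := ht
  have hlow : t ≤ Real.arcsin t := by
    have hs := Real.sin_le (Real.arcsin_nonneg.mpr h0)
    rwa [Real.sin_arcsin (by linarith) h1] at hs
  refine ⟨by linarith, ?_⟩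
  rcases eq_or_lt_of_le h0 with rfl | ht0
  · simp
  · set F : ℝ → ℝ := fun y => (Real.arcsin y - y) / y^3 with hF
    have hmono : MonotoneOn F (Set.Ioc (0:ℝ) 1) := by
      apply monotoneOn_of_deriv_nonneg (convex_Ioc 0 1)
      · apply ContinuousOn.div
        · exact (Real.continuous_arcsin.sub continuous_id).continuousOn
        · fun_prop
        · intro y hy
          exact pow_ne_zero 3 (ne_of_gt hy.1)
      · rw [interior_Ioc]
        intro x hx
        obtain ⟨hx0, hx1⟩ := hx
        have harc : DifferentiableAt ℝ Real.arcsin x :=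
          (Real.hasDerivAt_arcsin (by linarith) hx1.ne).differentiableAt
        apply DifferentiableAt.differentiableWithinAt
        exact ((harc.sub differentiableAt_id).div (differentiableAt_pow 3)
          (pow_ne_zero 3 hx0.ne'))
      · rw [interior_Ioc]
        intro x hx
        obtain ⟨hx0, hx1⟩ := hx
        have h1x : (0:ℝ) < 1 - x^2 := by nlinarith
        have harc : HasDerivAt Real.arcsin (1 / Real.sqrt (1 - x^2)) x :=
          Real.hasDerivAt_arcsin (by linarith) hx1.ne
        have hFd : HasDerivAt F
            (((1 / Real.sqrt (1 - x^2) - 1) * x^3 - (Real.arcsin x - x) * (3 * x^2)) / (x^3)^2) x := by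
          have := ((harc.sub (hasDerivAt_id x)).div (hasDerivAt_pow 3 x)
            (pow_ne_zero 3 hx0.ne'))
          refine this.congr_deriv ?_
          norm_num
        rw [hFd.deriv]
        apply div_nonneg _ (by positivity)
        have key := aux1 x ⟨hx0.le, hx1⟩
        nlinarith [sq_nonneg x, hx0]
    have hFt : F t ≤ F 1 := hmono ⟨ht0, h1⟩ ⟨one_pos, le_refl 1⟩ h1
    have hF1 : F 1 = π/2 - 1 := by simp [hF, Real.arcsin_one]
    rw [hF1] at hFt
    calc Real.arcsin t - t = F t * t^3 := by
          field_simp [hF]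
          rw [hF]
          field_simp
      _ ≤ (π/2 - 1) * t^3 := by
          exact mul_le_mul_of_nonneg_right hFt (by positivity)
end

section
/- For b > 1 and t ∈ [0,1], 0 ≤ b · arcsin(t/b) - t ≤ (π/2 - 1) t³ / b². -/
set_option maxHeartbeats 1000000

open Real

private lemma arcsin_ge_self {s : ℝ} (h0 : 0 ≤ s) (h1 : s ≤ 1) : s ≤ Real.arcsin s := by
  have h := Real.sin_le (Real.arcsin_nonneg.2 h0)
  rwa [Real.sin_arcsin (by linarith) h1] at h

private lemma arcsin_le_cubic {s : ℝ} (h0 : 0 ≤ s) (h1 : s ≤ 1) :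
    Real.arcsin s ≤ s + (π / 2 - 1) * s ^ 3 := by
  set c : ℝ := π / 2 - 1 with hc_def
  have hpi1 : (3:ℝ) < π := Real.pi_gt_three
  have hpi2 : π < 3.15 := Real.pi_lt_d2
  have hc : 0 < c := by rw [hc_def]; linarith
  have hc2 : 3 * c < 2 := by rw [hc_def]; linarith
  -- the auxiliary quadratic
  set q : ℝ → ℝ := fun x => -9*c^2*x^2 + (9*c^2-6*c)*x + (6*c-1) with hq_def
  have hchalf : (1:ℝ)/2 < c := by rw [hc_def]; linarith
  have hq_anti : ∀ x x' : ℝ, 0 ≤ x → x ≤ x' → q x' ≤ q x := by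
    intro x x' hx hxx'
    simp only [hq_def]
    have h6 : 0 < 6*c - 9*c^2 := by nlinarith
    have hxx : 0 ≤ x + x' := by linarith
    have key : 0 ≤ (x' - x) * (9*c^2*(x'+x) + (6*c - 9*c^2)) := by
      apply mul_nonneg (by linarith)
      nlinarith [mul_nonneg (sq_nonneg c) hxx]
    nlinarith [key]
  have hq0 : 0 < q 0 := by
    have h : q 0 = 6 * c - 1 := by simp only [hq_def]; ring
    rw [h, hc_def]; linarith
  have hq1 : q 1 < 0 := by
    have h : q 1 = -1 := by simp only [hq_def]; ring
    rw [h]; norm_num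
  -- root of q in (0,1)
  obtain ⟨x₀, hx₀mem, hx₀⟩ : ∃ x₀ ∈ Set.Icc (0:ℝ) 1, q x₀ = 0 := by
    have hcont : ContinuousOn q (Set.Icc 0 1) := by
      simp only [hq_def]; fun_prop
    have := intermediate_value_Icc' (by norm_num : (0:ℝ) ≤ 1) hcont
      (Set.mem_Icc.2 ⟨le_of_lt hq1, le_of_lt hq0⟩)
    obtain ⟨x₀, hmem, hx₀⟩ := this
    exact ⟨x₀, hmem, hx₀⟩
  have hx₀0 : 0 < x₀ := by
    rcases lt_or_eq_of_le hx₀mem.1 with h | h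
    · exact h
    · exfalso; rw [← h] at hx₀; linarith
  have hx₀1 : x₀ < 1 := by
    rcases lt_or_eq_of_le hx₀mem.2 with h | h
    · exact h
    · exfalso; rw [h] at hx₀; linarith
  set s₀ : ℝ := Real.sqrt x₀ with hs₀_def
  have hs₀0 : 0 < s₀ := Real.sqrt_pos.2 hx₀0
  have hs₀1 : s₀ < 1 := by
    rw [hs₀_def, show (1:ℝ) = Real.sqrt 1 by simp]
    exact Real.sqrt_lt_sqrt (le_of_lt hx₀0) hx₀1
  have hs₀sq : s₀ ^ 2 = x₀ := Real.sq_sqrt (le_of_lt hx₀0)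
  -- the function G
  set G : ℝ → ℝ := fun u => c * u ^ 3 + u - Real.arcsin u with hG_def
  have hGderiv : ∀ u : ℝ, -1 < u → u < 1 →
      HasDerivAt G (3 * c * u ^ 2 + 1 - 1 / Real.sqrt (1 - u ^ 2)) u := by
    intro u hu1 hu2
    have h1 : HasDerivAt (fun v : ℝ => c * v ^ 3) (c * (3 * u ^ 2)) u := by
      simpa using ((hasDerivAt_pow 3 u).const_mul c)
    have h2 : HasDerivAt (fun v : ℝ => v) 1 u := hasDerivAt_id u
    have h3 : HasDerivAt Real.arcsin (1 / Real.sqrt (1 - u ^ 2)) u :=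
      Real.hasDerivAt_arcsin (by linarith) (by linarith)
    have := (h1.add h2).sub h3
    refine this.congr_deriv ?_
    ring
  have hGcont : Continuous G := by
    simp only [hG_def]
    exact ((continuous_const.mul (continuous_pow 3)).add continuous_id).sub
      Real.continuous_arcsin
  -- derivative sign facts
  have hderiv_eq : ∀ u : ℝ, -1 < u → u < 1 →
      deriv G u = 3 * c * u ^ 2 + 1 - 1 / Real.sqrt (1 - u ^ 2) := fun u h1 h2 =>
    (hGderiv u h1 h2).deriv
  have hsqrt_pos : ∀ u : ℝ, -1 < u → u < 1 → 0 < Real.sqrt (1 - u ^ 2) := by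
    intro u h1 h2
    apply Real.sqrt_pos.2
    nlinarith
  -- G monotone on [0, s₀]
  have hmono : MonotoneOn G (Set.Icc 0 s₀) := by
    apply monotoneOn_of_deriv_nonneg (convex_Icc 0 s₀) hGcont.continuousOn
    · intro u hu
      rw [interior_Icc] at hu
      exact ((hGderiv u (by linarith [hu.1]) (by linarith [hu.2])).differentiableAt).differentiableWithinAt
    · intro u hu
      rw [interior_Icc] at hu
      have hu0 : 0 < u := hu.1
      have hu1 : u < 1 := lt_trans hu.2 hs₀1
      rw [hderiv_eq u (by linarith) hu1]
      have hy := hsqrt_pos u (by linarith) hu1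
      set y := Real.sqrt (1 - u ^ 2) with hy_def
      have hy2 : y ^ 2 = 1 - u ^ 2 := Real.sq_sqrt (by nlinarith)
      -- q (u^2) ≥ 0 since u^2 ≤ x₀
      have hqu : 0 ≤ q (u ^ 2) := by
        rw [← hx₀]
        apply hq_anti _ _ (sq_nonneg u)
        rw [← hs₀sq]
        exact pow_le_pow_left₀ (le_of_lt hu0) (le_of_lt hu.2) 2
      have hkey : 1 ≤ (3 * c * u ^ 2 + 1) * y := by
        have hA : 0 ≤ (3 * c * u ^ 2 + 1) * y := by positivity
        have hsq : 1 ≤ ((3 * c * u ^ 2 + 1) * y) ^ 2 := by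
          have heq : ((3 * c * u ^ 2 + 1) * y) ^ 2 = 1 + u ^ 2 * q (u ^ 2) := by
            simp only [hq_def]; rw [mul_pow, hy2]; ring
          rw [heq]
          have := mul_nonneg (sq_nonneg u) hqu
          linarith
        exact (one_le_pow_iff_of_nonneg hA two_ne_zero).mp hsq
      have : 1 / y ≤ 3 * c * u ^ 2 + 1 := by
        rw [div_le_iff₀ hy]
        linarith
      linarith
  -- G antitone on [s₀, 1]
  have hanti : AntitoneOn G (Set.Icc s₀ 1) := by
    apply antitoneOn_of_deriv_nonpos (convex_Icc s₀ 1) hGcont.continuousOn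
    · intro u hu
      rw [interior_Icc] at hu
      exact ((hGderiv u (by linarith [hu.1, hs₀0]) hu.2).differentiableAt).differentiableWithinAt
    · intro u hu
      rw [interior_Icc] at hu
      have hu0 : 0 < u := lt_trans hs₀0 hu.1
      have hu1 : u < 1 := hu.2
      rw [hderiv_eq u (by linarith) hu1]
      have hy := hsqrt_pos u (by linarith) hu1
      set y := Real.sqrt (1 - u ^ 2) with hy_def
      have hy2 : y ^ 2 = 1 - u ^ 2 := Real.sq_sqrt (by nlinarith)
      have hqu : q (u ^ 2) ≤ 0 := by
        rw [← hx₀]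
        apply hq_anti _ _ (le_of_lt hx₀0)
        rw [← hs₀sq]
        exact pow_le_pow_left₀ (le_of_lt hs₀0) (le_of_lt hu.1) 2
      have hkey : (3 * c * u ^ 2 + 1) * y ≤ 1 := by
        have hA : 0 ≤ (3 * c * u ^ 2 + 1) * y := by positivity
        have hsq : ((3 * c * u ^ 2 + 1) * y) ^ 2 ≤ 1 := by
          have heq : ((3 * c * u ^ 2 + 1) * y) ^ 2 = 1 + u ^ 2 * q (u ^ 2) := by
            simp only [hq_def]; rw [mul_pow, hy2]; ring
          rw [heq]
          have := mul_nonpos_of_nonneg_of_nonpos (sq_nonneg u) hqu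
          linarith
        exact (pow_le_one_iff_of_nonneg hA two_ne_zero).mp hsq
      have : 3 * c * u ^ 2 + 1 ≤ 1 / y := by
        rw [le_div_iff₀ hy]
        linarith
      linarith
  -- endpoints
  have hG0 : G 0 = 0 := by simp [hG_def]
  have hG1 : G 1 = 0 := by
    simp only [hG_def, Real.arcsin_one, hc_def]
    ring
  -- conclude G s ≥ 0
  have hGs : 0 ≤ G s := by
    rcases le_or_gt s s₀ with h | h
    · have := hmono (Set.mem_Icc.2 ⟨le_refl 0, le_of_lt hs₀0⟩)
        (Set.mem_Icc.2 ⟨h0, h⟩) h0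
      rwa [hG0] at this
    · have := hanti (Set.mem_Icc.2 ⟨le_of_lt h, h1⟩)
        (Set.mem_Icc.2 ⟨le_of_lt hs₀1, le_refl 1⟩) h1
      rw [hG1] at this
      linarith
  simp only [hG_def] at hGs
  linarith

theorem b_arcsin_bound (b t : ℝ) (hb : 1 < b) (ht : t ∈ Set.Icc (0:ℝ) 1) :
    0 ≤ b * Real.arcsin (t / b) - t ∧
      b * Real.arcsin (t / b) - t ≤ (π / 2 - 1) * t ^ 3 / b ^ 2 := by
  obtain ⟨ht0, ht1⟩ := ht
  have hb0 : 0 < b := by linarith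
  set s : ℝ := t / b with hs_def
  have hs0 : 0 ≤ s := div_nonneg ht0 (le_of_lt hb0)
  have hs1 : s ≤ 1 := by
    rw [hs_def, div_le_one hb0]; linarith
  have hbs : b * s = t := by
    rw [hs_def]; field_simp
  have hpi : (2:ℝ) < π := by linarith [Real.pi_gt_three]
  constructor
  · have := arcsin_ge_self hs0 hs1
    nlinarith [this]
  · have h := arcsin_le_cubic hs0 hs1
    have h2 : b * Real.arcsin s ≤ b * (s + (π / 2 - 1) * s ^ 3) :=
      mul_le_mul_of_nonneg_left h (le_of_lt hb0)
    have h3 : b * (s + (π / 2 - 1) * s ^ 3) = t + (π / 2 - 1) * t ^ 3 / b ^ 2 := by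
      rw [hs_def]; field_simp
    linarith
end

section
/- For b > 1 and x > 0, |I(b,x) - J₀(x/b)| ≤ ((2 - 4/π)/3) · x / b³, where I(b,x) = (2/π) ∫₀¹ cos(x arcsin(t/b))/√(1-t²) dt and J₀(y) = (2/π) ∫₀¹ cos(yt)/√(1-t²) dt. -/
open Real MeasureTheory intervalIntegral Set

lemma aux_rpow_int : IntervalIntegrable (fun t : ℝ => (1 - t) ^ (-(1/2) : ℝ)) volume 0 1 := by
  have := (intervalIntegrable_rpow' (r := -(1/2)) (by norm_num) (a := 0) (b := 1)).comp_sub_left 1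
  simpa using this.symm

lemma aux_integrable {f : ℝ → ℝ} (hm : AEStronglyMeasurable f (volume.restrict (Set.uIoc (0:ℝ) 1)))
    (h : ∀ t ∈ Set.Ioc (0:ℝ) 1, |f t| ≤ (1 - t) ^ (-(1/2) : ℝ)) :
    IntervalIntegrable f volume 0 1 := by
  apply aux_rpow_int.mono_fun hm
  rw [uIoc_of_le (by norm_num : (0:ℝ) ≤ 1)]
  filter_upwards [ae_restrict_mem measurableSet_Ioc] with t ht
  rw [Real.norm_eq_abs, Real.norm_eq_abs, abs_of_nonneg (Real.rpow_nonneg (by linarith [ht.2]) _)]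
  exact h t ht

lemma inv_sqrt_le {t : ℝ} (ht : t ∈ Set.Ioc (0:ℝ) 1) :
    1 / Real.sqrt (1 - t^2) ≤ (1 - t) ^ (-(1/2) : ℝ) := by
  rcases eq_or_lt_of_le ht.2 with h1 | h1
  · subst h1
    rw [show (1:ℝ)-1^2 = 0 by norm_num, Real.sqrt_zero, div_zero,
      show (1:ℝ)-1 = 0 by norm_num, Real.zero_rpow (by norm_num)]
  · have h0 : (0:ℝ) < 1 - t := by linarith
    have h2 : (1 - t) ^ (-(1/2) : ℝ) = 1 / Real.sqrt (1 - t) := by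
      rw [Real.rpow_neg h0.le, ← Real.sqrt_eq_rpow, one_div]
    rw [h2]
    apply one_div_le_one_div_of_le (Real.sqrt_pos.2 (by nlinarith [ht.1]))
    exact Real.sqrt_le_sqrt (by nlinarith [ht.1, ht.2])

lemma int_inv_sqrt_integrable :
    IntervalIntegrable (fun t : ℝ => 1 / Real.sqrt (1 - t^2)) volume 0 1 := by
  apply aux_integrable
  · apply Measurable.aestronglyMeasurable
    fun_prop
  · intro t ht
    rw [abs_of_nonneg (by positivity)]
    exact inv_sqrt_le ht

lemma int_inv_sqrt : ∫ t in (0:ℝ)..1, 1 / Real.sqrt (1 - t^2) = π/2 := by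
  have h := integral_eq_sub_of_hasDeriv_right_of_le (f := Real.arcsin)
    (f' := fun t : ℝ => 1 / Real.sqrt (1 - t^2)) (by norm_num)
    Real.continuous_arcsin.continuousOn
    (fun t ht => (Real.hasDerivAt_arcsin (by intro h; rw [h] at ht; exact absurd ht.1 (by norm_num))
      (ne_of_lt ht.2)).hasDerivWithinAt)
    int_inv_sqrt_integrable
  rw [h, Real.arcsin_one, Real.arcsin_zero, sub_zero]

lemma int_cube_integrable :
    IntervalIntegrable (fun t : ℝ => t^3 / Real.sqrt (1 - t^2)) volume 0 1 := by
  apply aux_integrable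
  · apply Measurable.aestronglyMeasurable
    fun_prop
  · intro t ht
    have h1 : t^3 ≤ 1 := by
      calc t^3 ≤ 1^3 := pow_le_pow_left₀ ht.1.le ht.2 3
        _ = 1 := one_pow 3
    calc |t^3 / Real.sqrt (1 - t^2)| = t^3 * (1 / Real.sqrt (1 - t^2)) := by
          rw [abs_of_nonneg (div_nonneg (pow_nonneg ht.1.le 3) (Real.sqrt_nonneg _))]; ring
      _ ≤ 1 * ((1 - t) ^ (-(1/2) : ℝ)) := by
          apply mul_le_mul h1 (inv_sqrt_le ht) (by positivity)
          norm_num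
      _ = (1 - t) ^ (-(1/2) : ℝ) := one_mul _

lemma int_cube : ∫ t in (0:ℝ)..1, t^3 / Real.sqrt (1 - t^2) = 2/3 := by
  have h := integral_eq_sub_of_hasDeriv_right_of_le
    (f := fun t : ℝ => -((t^2 + 2) * Real.sqrt (1 - t^2)) / 3)
    (f' := fun t : ℝ => t^3 / Real.sqrt (1 - t^2)) (by norm_num)
    (by fun_prop)
    (fun t ht => by
      have hpos : (0:ℝ) < 1 - t^2 := by nlinarith [ht.1, ht.2]
      have hs : Real.sqrt (1 - t^2) ≠ 0 := (Real.sqrt_pos.2 hpos).ne'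
      have hsq : Real.sqrt (1 - t^2) ^ 2 = 1 - t^2 := Real.sq_sqrt hpos.le
      have h1 : HasDerivAt (fun t : ℝ => 1 - t^2) (-(2*t)) t := by
        simpa using ((hasDerivAt_pow 2 t).const_sub 1)
      have h2 : HasDerivAt (fun t : ℝ => Real.sqrt (1 - t^2)) (-(2*t) / (2 * Real.sqrt (1 - t^2))) t :=
        h1.sqrt (by positivity)
      have h3 : HasDerivAt (fun t : ℝ => t^2 + 2) (2*t) t := by
        simpa using ((hasDerivAt_pow 2 t).add_const 2)
      have h4 := ((h3.mul h2).neg.div_const 3)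
      convert h4.hasDerivWithinAt using 1
      · funext y; simp only [Pi.mul_apply, Pi.neg_apply]
      field_simp
      linear_combination (2*t) * hsq) int_cube_integrable
  rw [h]
  norm_num

lemma chord {s v : ℝ} (hs0 : 0 ≤ s) (hs1 : s < 1) (hv0 : 0 ≤ v) (hv1 : v < 1) :
    1 / Real.sqrt (1 - (s*v)^2) - 1 ≤ s^2 * (1 / Real.sqrt (1 - v^2) - 1) := by
  set A := Real.sqrt (1 - v^2) with hA
  set B := Real.sqrt (1 - (s*v)^2) with hB
  have hsv : s * v ≤ v := by nlinarith
  have hv2 : v^2 < 1 := by nlinarith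
  have hsv2 : (s*v)^2 ≤ v^2 := by nlinarith [mul_nonneg hs0 hv0]
  have hApos : 0 < A := Real.sqrt_pos.2 (by linarith)
  have hBpos : 0 < B := Real.sqrt_pos.2 (by linarith)
  have hA2 : A^2 = 1 - v^2 := Real.sq_sqrt (by linarith)
  have hB2 : B^2 = 1 - (s*v)^2 := Real.sq_sqrt (by linarith)
  have hAB : A ≤ B := Real.sqrt_le_sqrt (by linarith)
  have h1 : 1 / B - 1 = s^2*v^2 / (B*(1+B)) := by
    field_simp
    linear_combination (-1) * hB2
  have h2 : s^2 * (1 / A - 1) = s^2*v^2 / (A*(1+A)) := by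
    field_simp
    linear_combination (-(s^2)) * hA2
  rw [h1, h2]
  apply div_le_div_of_nonneg_left (by positivity) (by positivity)
  nlinarith

lemma arcsin_sub_le {s : ℝ} (hs0 : 0 ≤ s) (hs1 : s < 1) :
    Real.arcsin s - s ≤ (π/2 - 1) * s^3 := by
  rcases eq_or_lt_of_le hs0 with h | hs0'
  · rw [← h]; simp
  have hcont : ∀ c : ℝ, 0 ≤ c → c < 1 → ContinuousOn (fun u : ℝ => 1 / Real.sqrt (1 - u^2) - 1)
      (Set.uIcc 0 c) := by
    intro c hc0 hc1
    apply ContinuousOn.sub _ continuousOn_const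
    apply ContinuousOn.div continuousOn_const (by fun_prop)
    intro u hu
    rw [Set.uIcc_of_le hc0] at hu
    have : (0:ℝ) < 1 - u^2 := by nlinarith [hu.1, hu.2]
    exact (Real.sqrt_pos.2 this).ne'
  have hFTC : Real.arcsin s - s = ∫ u in (0:ℝ)..s, (1 / Real.sqrt (1 - u^2) - 1) := by
    have h := integral_eq_sub_of_hasDerivAt (f := fun u : ℝ => Real.arcsin u - u)
      (f' := fun u : ℝ => 1 / Real.sqrt (1 - u^2) - 1)
      (fun u hu => by
        rw [Set.uIcc_of_le hs0] at hu
        exact ((Real.hasDerivAt_arcsin (by intro h; rw [h] at hu; linarith [hu.1])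
          (by intro h; rw [h] at hu; linarith [hu.2])).sub (hasDerivAt_id u)))
      (((hcont s hs0 hs1).intervalIntegrable))
    rw [h]
    simp
  have hsub : ∫ u in (0:ℝ)..s, (1 / Real.sqrt (1 - u^2) - 1)
      = s * ∫ v in (0:ℝ)..1, (1 / Real.sqrt (1 - (s*v)^2) - 1) := by
    rw [intervalIntegral.integral_comp_mul_left (fun u => 1 / Real.sqrt (1 - u^2) - 1) hs0'.ne']
    simp [smul_eq_mul]
    rw [← mul_assoc, mul_inv_cancel₀ hs0'.ne', one_mul]
  have hIright : IntervalIntegrable (fun v : ℝ => s^2 * (1 / Real.sqrt (1 - v^2) - 1)) volume 0 1 :=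
    ((int_inv_sqrt_integrable.sub intervalIntegrable_const).const_mul _)
  have hIleft : IntervalIntegrable (fun v : ℝ => 1 / Real.sqrt (1 - (s*v)^2) - 1) volume 0 1 := by
    apply ContinuousOn.intervalIntegrable
    have := (hcont s hs0 hs1)
    apply ContinuousOn.sub _ continuousOn_const
    apply ContinuousOn.div continuousOn_const (by fun_prop)
    intro v hv
    rw [Set.uIcc_of_le (by norm_num : (0:ℝ) ≤ 1)] at hv
    have hsv : s * v ≤ s := by nlinarith [hv.1, hv.2]
    have : (0:ℝ) < 1 - (s*v)^2 := by nlinarith [hv.1, hv.2, mul_nonneg hs0 hv.1]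
    exact (Real.sqrt_pos.2 this).ne'
  have hmono : ∫ v in (0:ℝ)..1, (1 / Real.sqrt (1 - (s*v)^2) - 1)
      ≤ ∫ v in (0:ℝ)..1, s^2 * (1 / Real.sqrt (1 - v^2) - 1) := by
    apply intervalIntegral.integral_mono_ae_restrict (by norm_num) hIleft hIright
    have hne : ∀ᵐ v ∂(volume : Measure ℝ), v ≠ 1 := by
      have hset : {v : ℝ | ¬ v ≠ 1} = {1} := by ext v; simp
      rw [ae_iff, hset]
      exact Real.volume_singleton
    filter_upwards [ae_restrict_mem measurableSet_Icc, ae_restrict_of_ae hne] with v hv hv1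
    exact chord hs0 hs1 hv.1 (lt_of_le_of_ne hv.2 hv1)
  have hval : ∫ v in (0:ℝ)..1, s^2 * (1 / Real.sqrt (1 - v^2) - 1) = s^2 * (π/2 - 1) := by
    rw [intervalIntegral.integral_const_mul,
      intervalIntegral.integral_sub int_inv_sqrt_integrable intervalIntegrable_const,
      int_inv_sqrt]
    norm_num
  rw [hFTC, hsub]
  calc s * ∫ v in (0:ℝ)..1, (1 / Real.sqrt (1 - (s*v)^2) - 1)
      ≤ s * (s^2 * (π/2 - 1)) := by
        apply mul_le_mul_of_nonneg_left _ hs0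
        rw [← hval]; exact hmono
    _ = (π/2 - 1) * s^3 := by ring

lemma cos_lip (a c : ℝ) : |Real.cos a - Real.cos c| ≤ |a - c| := by
  rw [Real.cos_sub_cos, abs_mul, abs_mul, abs_neg, abs_two]
  calc 2 * |Real.sin ((a + c)/2)| * |Real.sin ((a - c)/2)|
      ≤ 2 * 1 * |(a - c)/2| := by
        apply mul_le_mul (by
          apply mul_le_mul_of_nonneg_left (Real.abs_sin_le_one _) (by norm_num))
          (Real.abs_sin_le_abs) (abs_nonneg _) (by norm_num)
    _ = |a - c| := by rw [abs_div, abs_two]; ring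

theorem I_sub_besselJ0_bound (b x : ℝ) (hb : 1 < b) (hx : 0 < x) :
    |((2 / π) * ∫ t in (0:ℝ)..1,
          Real.cos (x * Real.arcsin (t / b)) / Real.sqrt (1 - t ^ 2)) -
        ((2 / π) * ∫ t in (0:ℝ)..1,
          Real.cos ((x / b) * t) / Real.sqrt (1 - t ^ 2))| ≤
      ((2 - 4 / π) / 3) * x / b ^ 3 := by
  have hb0 : (0:ℝ) < b := by linarith
  have hpi : (0:ℝ) < π := Real.pi_pos
  have hpi2 : (2:ℝ) ≤ π := Real.two_le_pi
  set f := fun t : ℝ => Real.cos (x * Real.arcsin (t / b)) / Real.sqrt (1 - t ^ 2) with hf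
  set g := fun t : ℝ => Real.cos ((x / b) * t) / Real.sqrt (1 - t ^ 2) with hg
  have habs : ∀ (c t : ℝ), |Real.cos c / Real.sqrt (1 - t^2)| ≤ 1 / Real.sqrt (1 - t^2) := by
    intro c t
    rw [abs_div, abs_of_nonneg (Real.sqrt_nonneg _)]
    rcases eq_or_lt_of_le (Real.sqrt_nonneg (1 - t^2)) with h | h
    · rw [← h]; simp
    · exact (div_le_div_iff_of_pos_right h).mpr (Real.abs_cos_le_one c)
  have hmsqrt : Measurable fun t : ℝ => Real.sqrt (1 - t^2) :=
    (Real.continuous_sqrt.comp (by continuity)).measurable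
  have hIf : IntervalIntegrable f volume 0 1 := by
    apply aux_integrable
    · apply Measurable.aestronglyMeasurable
      exact ((Real.continuous_cos.comp (continuous_const.mul
        (Real.continuous_arcsin.comp (continuous_id.div_const b)))).measurable).div hmsqrt
    · intro t ht
      exact (habs _ t).trans (inv_sqrt_le ht)
  have hIg : IntervalIntegrable g volume 0 1 := by
    apply aux_integrable
    · apply Measurable.aestronglyMeasurable
      exact ((Real.continuous_cos.comp (continuous_const.mul continuous_id)).measurable).div hmsqrt
    · intro t ht
      exact (habs _ t).trans (inv_sqrt_le ht)
  set c := x * (π/2 - 1) / b^3 with hcdef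
  have hc : 0 ≤ c := by
    apply div_nonneg _ (by positivity)
    apply mul_nonneg hx.le (by linarith)
  rw [← mul_sub, ← intervalIntegral.integral_sub hIf hIg, abs_mul,
    abs_of_nonneg (by positivity : (0:ℝ) ≤ 2/π)]
  have hbound : |∫ t in (0:ℝ)..1, (f t - g t)| ≤ |∫ t in (0:ℝ)..1, c * (t^3 / Real.sqrt (1 - t^2))| := by
    rw [← Real.norm_eq_abs (∫ t in (0:ℝ)..1, (f t - g t))]
    apply intervalIntegral.norm_integral_le_abs_of_norm_le _ (int_cube_integrable.const_mul c)
    rw [uIoc_of_le (by norm_num : (0:ℝ) ≤ 1)]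
    filter_upwards [ae_restrict_mem measurableSet_Ioc] with t ht
    have hs0 : 0 ≤ t / b := div_nonneg ht.1.le hb0.le
    have hs1 : t / b < 1 := by rw [div_lt_one hb0]; linarith [ht.2]
    have harc1 : t / b ≤ Real.arcsin (t / b) := by
      conv_lhs => rw [← Real.sin_arcsin (by linarith) hs1.le]
      exact Real.sin_le (Real.arcsin_nonneg.2 hs0)
    have harc2 : Real.arcsin (t/b) - t/b ≤ (π/2-1) * (t/b)^3 := arcsin_sub_le hs0 hs1
    have hnum : |Real.cos (x * Real.arcsin (t/b)) - Real.cos (x/b*t)| ≤ c * t^3 := by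
      calc |Real.cos (x * Real.arcsin (t/b)) - Real.cos (x/b*t)|
          ≤ |x * Real.arcsin (t/b) - x/b*t| := cos_lip _ _
        _ = x * (Real.arcsin (t/b) - t/b) := by
            have hring : x/b*t = x*(t/b) := by ring
            rw [abs_of_nonneg (by
              rw [hring]
              have := mul_le_mul_of_nonneg_left harc1 hx.le
              linarith)]
            field_simp
        _ ≤ x * ((π/2-1) * (t/b)^3) := mul_le_mul_of_nonneg_left harc2 hx.le
        _ = c * t^3 := by rw [hcdef]; field_simp
    have hfg : f t - g t = (Real.cos (x * Real.arcsin (t/b)) - Real.cos (x/b*t)) / Real.sqrt (1 - t^2) := by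
      rw [hf, hg]
      ring
    rw [Real.norm_eq_abs, hfg, abs_div, abs_of_nonneg (Real.sqrt_nonneg _)]
    rcases eq_or_lt_of_le (Real.sqrt_nonneg (1 - t^2)) with h | h
    · rw [← h]
      simp
    · rw [← mul_div_assoc]
      exact (div_le_div_iff_of_pos_right h).mpr hnum
  have hval : ∫ t in (0:ℝ)..1, c * (t^3 / Real.sqrt (1 - t^2)) = c * (2/3) := by
    rw [intervalIntegral.integral_const_mul, int_cube]
  rw [hval] at hbound
  rw [abs_of_nonneg (mul_nonneg hc (by norm_num : (0:ℝ) ≤ 2/3))] at hbound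
  calc 2/π * |∫ t in (0:ℝ)..1, (f t - g t)| ≤ 2/π * (c * (2/3)) := by
        apply mul_le_mul_of_nonneg_left hbound (by positivity)
    _ = (2 - 4/π)/3 * x / b^3 := by
        rw [hcdef]
        field_simp
        ring
end

section
/- Define polynomials Qₙ(x) by Q₁(x) = x² and Q_{n+1}(x) = (n!)² x² + ∑_{j=0}^{n-1} C(n,j) C(n,j+1) Q_{j+1}(x) Q_{n-j}(x). Then for all n ≥ 1 and all real x, |Qₙ(x)| ≤ n! (n-1)! · max(1,|x|)^{2n}. -/
open Finset

theorem Q_poly_bound (Q : ℕ → ℝ → ℝ)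
    (hQ1 : ∀ x : ℝ, Q 1 x = x ^ 2)
    (hrec : ∀ n : ℕ, 1 ≤ n → ∀ x : ℝ,
      Q (n + 1) x = (n.factorial : ℝ) ^ 2 * x ^ 2 +
        ∑ j ∈ Finset.range n,
          (n.choose j : ℝ) * (n.choose (j + 1) : ℝ) * Q (j + 1) x * Q (n - j) x) :
    ∀ n : ℕ, 1 ≤ n → ∀ x : ℝ,
      |Q n x| ≤ (n.factorial : ℝ) * ((n - 1).factorial : ℝ) * max 1 |x| ^ (2 * n) := by
  intro n
  induction n using Nat.strong_induction_on with
  | _ n ih =>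
    intro hn x
    have hM1 : (1:ℝ) ≤ max 1 |x| := le_max_left _ _
    have hxM : |x| ≤ max 1 |x| := le_max_right _ _
    have hM0 : (0:ℝ) ≤ max 1 |x| := by linarith
    match n, hn, ih with
    | 1, _, _ =>
      rw [hQ1, abs_pow]
      simp only [Nat.factorial]
      norm_num
      calc x ^ 2 = |x| ^ 2 := (sq_abs x).symm
        _ ≤ (max 1 |x|) ^ 2 := pow_le_pow_left₀ (abs_nonneg x) hxM 2
        _ = (max 1 |x|) ^ (2 * 1) := by ring
    | (k+2), _, ih =>
      rw [hrec (k+1) (by omega) x]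
      set M := max 1 |x| with hMdef
      have hstep : ∀ j ∈ Finset.range (k+1),
          |((k+1).choose j : ℝ) * ((k+1).choose (j+1) : ℝ) * Q (j+1) x * Q (k+1-j) x|
            ≤ ((k+1).factorial : ℝ) * ((k+1).factorial : ℝ) * M ^ (2*(k+2)) := by
        intro j hj
        have hjk : j ≤ k := Nat.lt_succ_iff.mp (Finset.mem_range.mp hj)
        have h1 := ih (j+1) (by omega) (by omega) x
        have h2 := ih (k+1-j) (by omega) (by omega) x
        have e1 : (j+1) - 1 = j := rfl
        have e2 : (k+1-j) - 1 = k - j := by omega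
        rw [e1] at h1
        rw [e2] at h2
        have hnat : (k+1).choose j * (k+1).choose (j+1) *
            ((j+1).factorial * j.factorial * ((k+1-j).factorial * (k-j).factorial))
            = (k+1).factorial * (k+1).factorial := by
          have ha := Nat.choose_mul_factorial_mul_factorial (show j ≤ k+1 by omega)
          have hb := Nat.choose_mul_factorial_mul_factorial (show j+1 ≤ k+1 by omega)
          have e3 : k+1-(j+1) = k-j := by omega
          rw [e3] at hb
          calc (k+1).choose j * (k+1).choose (j+1) *
              ((j+1).factorial * j.factorial * ((k+1-j).factorial * (k-j).factorial))
              = ((k+1).choose j * j.factorial * (k+1-j).factorial) *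
                ((k+1).choose (j+1) * (j+1).factorial * (k-j).factorial) := by ring
            _ = (k+1).factorial * (k+1).factorial := by rw [ha, hb]
        have hcast : ((k+1).choose j : ℝ) * ((k+1).choose (j+1) : ℝ) *
            (((j+1).factorial : ℝ) * (j.factorial : ℝ) *
              (((k+1-j).factorial : ℝ) * ((k-j).factorial : ℝ)))
            = ((k+1).factorial : ℝ) * ((k+1).factorial : ℝ) := by
          exact_mod_cast congrArg (Nat.cast : ℕ → ℝ) hnat
        have hexp : 2*(j+1) + 2*(k+1-j) = 2*(k+2) := by omega
        calc |((k+1).choose j : ℝ) * ((k+1).choose (j+1) : ℝ) * Q (j+1) x * Q (k+1-j) x|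
            = ((k+1).choose j : ℝ) * ((k+1).choose (j+1) : ℝ) * (|Q (j+1) x| * |Q (k+1-j) x|) := by
              rw [abs_mul, abs_mul, abs_mul, abs_of_nonneg (by positivity : (0:ℝ) ≤ ((k+1).choose j : ℝ)),
                abs_of_nonneg (by positivity : (0:ℝ) ≤ ((k+1).choose (j+1) : ℝ))]
              ring
          _ ≤ ((k+1).choose j : ℝ) * ((k+1).choose (j+1) : ℝ) *
              ((((j+1).factorial : ℝ) * (j.factorial : ℝ) * M ^ (2*(j+1))) *
               (((k+1-j).factorial : ℝ) * ((k-j).factorial : ℝ) * M ^ (2*(k+1-j)))) := by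
              apply mul_le_mul_of_nonneg_left _ (by positivity)
              exact mul_le_mul h1 h2 (abs_nonneg _) (by positivity)
          _ = (((k+1).choose j : ℝ) * ((k+1).choose (j+1) : ℝ) *
                (((j+1).factorial : ℝ) * (j.factorial : ℝ) *
                  (((k+1-j).factorial : ℝ) * ((k-j).factorial : ℝ)))) *
              (M ^ (2*(j+1)) * M ^ (2*(k+1-j))) := by ring
          _ = ((k+1).factorial : ℝ) * ((k+1).factorial : ℝ) * M ^ (2*(k+2)) := by
              rw [hcast, ← pow_add, hexp]
      have hfirst : |((k+1).factorial : ℝ) ^ 2 * x ^ 2|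
          ≤ ((k+1).factorial : ℝ) ^ 2 * M ^ (2*(k+2)) := by
        rw [abs_of_nonneg (by positivity)]
        have hx2 : x ^ 2 ≤ M ^ (2*(k+2)) := by
          calc x ^ 2 = |x| ^ 2 := (sq_abs x).symm
            _ ≤ M ^ 2 := pow_le_pow_left₀ (abs_nonneg x) hxM 2
            _ ≤ M ^ (2*(k+2)) := pow_le_pow_right₀ hM1 (by omega)
        exact mul_le_mul_of_nonneg_left hx2 (by positivity)
      calc |((k+1).factorial : ℝ) ^ 2 * x ^ 2 +
            ∑ j ∈ Finset.range (k+1),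
              ((k+1).choose j : ℝ) * ((k+1).choose (j+1) : ℝ) * Q (j+1) x * Q (k+1-j) x|
          ≤ |((k+1).factorial : ℝ) ^ 2 * x ^ 2| +
            |∑ j ∈ Finset.range (k+1),
              ((k+1).choose j : ℝ) * ((k+1).choose (j+1) : ℝ) * Q (j+1) x * Q (k+1-j) x| :=
            abs_add_le _ _
        _ ≤ |((k+1).factorial : ℝ) ^ 2 * x ^ 2| +
            ∑ j ∈ Finset.range (k+1),
              |((k+1).choose j : ℝ) * ((k+1).choose (j+1) : ℝ) * Q (j+1) x * Q (k+1-j) x| :=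
            add_le_add_right (Finset.abs_sum_le_sum_abs _ _) _
        _ ≤ ((k+1).factorial : ℝ) ^ 2 * M ^ (2*(k+2)) +
            ∑ j ∈ Finset.range (k+1),
              ((k+1).factorial : ℝ) * ((k+1).factorial : ℝ) * M ^ (2*(k+2)) :=
            add_le_add hfirst (Finset.sum_le_sum hstep)
        _ = ((k+2).factorial : ℝ) * (((k+2)-1).factorial : ℝ) * M ^ (2*(k+2)) := by
            rw [Finset.sum_const, Finset.card_range]
            have : (k+2).factorial = (k+2) * (k+1).factorial := Nat.factorial_succ (k+1)
            rw [show (k+2)-1 = k+1 from rfl, this]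
            push_cast
            ring
end

section
/- Define Qₙ(x) by Q₁(x) = x² and Q_{n+1}(x) = (n!)² x² + ∑_{j=0}^{n-1} C(n,j) C(n,j+1) Q_{j+1}(x) Q_{n-j}(x). Then Qₙ(1) = n! · (n-1)! for all n ≥ 1. -/
open Finset

theorem Q_poly_at_one (Q : ℕ → ℝ → ℝ)
    (hQ1 : ∀ x : ℝ, Q 1 x = x ^ 2)
    (hrec : ∀ n : ℕ, 1 ≤ n → ∀ x : ℝ,
      Q (n + 1) x = (n.factorial : ℝ) ^ 2 * x ^ 2 +
        ∑ j ∈ Finset.range n,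
          (n.choose j : ℝ) * (n.choose (j + 1) : ℝ) * Q (j + 1) x * Q (n - j) x) :
    ∀ n : ℕ, 1 ≤ n → Q n 1 = (n.factorial : ℝ) * ((n - 1).factorial : ℝ) := by
  intro n
  induction n using Nat.strong_induction_on with
  | _ n ih =>
    intro hn
    match n, hn with
    | 1, _ => simp [hQ1]
    | (m+2), _ =>
      rw [hrec (m+1) (by omega)]
      have key : ∀ j ∈ range (m+1),
          (((m+1).choose j : ℝ)) * ((m+1).choose (j+1) : ℝ) * Q (j+1) 1 * Q (m+1-j) 1
            = ((m+1).factorial : ℝ) ^ 2 := by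
        intro j hj
        simp only [mem_range] at hj
        have h1 : Q (j+1) 1 = ((j+1).factorial : ℝ) * ((j+1-1).factorial : ℝ) :=
          ih (j+1) (by omega) (by omega)
        have h2 : Q (m+1-j) 1 = ((m+1-j).factorial : ℝ) * ((m+1-j-1).factorial : ℝ) :=
          ih (m+1-j) (by omega) (by omega)
        have e1 : j + 1 - 1 = j := by omega
        have e2 : m + 1 - j - 1 = m - j := by omega
        rw [h1, h2, e1, e2]
        have c1 : ((m+1).choose j) * j.factorial * (m+1-j).factorial = (m+1).factorial :=
          Nat.choose_mul_factorial_mul_factorial (by omega)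
        have c2 : ((m+1).choose (j+1)) * (j+1).factorial * (m-j).factorial = (m+1).factorial := by
          have := Nat.choose_mul_factorial_mul_factorial (n := m+1) (k := j+1) (by omega)
          have e3 : m + 1 - (j+1) = m - j := by omega
          rwa [e3] at this
        have c1' : (((m+1).choose j : ℝ)) * (j.factorial : ℝ) * ((m+1-j).factorial : ℝ)
            = ((m+1).factorial : ℝ) := by exact_mod_cast congrArg (Nat.cast : ℕ → ℝ) c1
        have c2' : (((m+1).choose (j+1) : ℝ)) * ((j+1).factorial : ℝ) * ((m-j).factorial : ℝ)
            = ((m+1).factorial : ℝ) := by exact_mod_cast congrArg (Nat.cast : ℕ → ℝ) c2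
        calc (((m+1).choose j : ℝ)) * ((m+1).choose (j+1) : ℝ)
              * (((j+1).factorial : ℝ) * (j.factorial : ℝ))
              * (((m+1-j).factorial : ℝ) * ((m-j).factorial : ℝ))
            = ((((m+1).choose j : ℝ)) * (j.factorial : ℝ) * ((m+1-j).factorial : ℝ))
              * ((((m+1).choose (j+1) : ℝ)) * ((j+1).factorial : ℝ) * ((m-j).factorial : ℝ)) := by
              ring
          _ = ((m+1).factorial : ℝ) ^ 2 := by rw [c1', c2']; ring
      rw [Finset.sum_congr rfl key, Finset.sum_const, card_range]
      have e4 : m + 2 - 1 = m + 1 := by omega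
      rw [e4]
      have hf : ((m+2).factorial : ℝ) = (m+2) * ((m+1).factorial : ℝ) := by
        rw [show m+2 = (m+1)+1 from rfl, Nat.factorial_succ]; push_cast; ring
      rw [hf]
      ring
end

section
/- Let g₀ = -x² and g_{n+1} = -(1/(n+2)) (x² + ∑_{j=0}^{n} g_j g_{n-j}) for n ≥ 0, where x is a real parameter. Then |g_n(x)| ≤ max(1, |x|)^{2n+2} for all n ≥ 0. -/
open Finset

theorem g_seq_bound (x : ℝ) (g : ℕ → ℝ)
    (hg0 : g 0 = -x ^ 2)
    (hrec : ∀ n : ℕ,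
      g (n + 1) = -(1 / ((n : ℝ) + 2)) * (x ^ 2 + ∑ j ∈ Finset.range (n + 1), g j * g (n - j))) :
    ∀ n : ℕ, |g n| ≤ max 1 |x| ^ (2 * n + 2) := by
  set M := max 1 |x| with hMdef
  have hM1 : (1 : ℝ) ≤ M := le_max_left _ _
  have hM0 : (0 : ℝ) ≤ M := le_trans zero_le_one hM1
  have hx : |x| ≤ M := le_max_right _ _
  have hx2 : x ^ 2 ≤ M ^ 2 := by
    calc x ^ 2 = |x| ^ 2 := (sq_abs x).symm
    _ ≤ M ^ 2 := pow_le_pow_left₀ (abs_nonneg x) hx 2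
  intro n
  induction n using Nat.strong_induction_on with
  | _ n ih =>
    match n with
    | 0 =>
      rw [hg0, abs_neg, abs_of_nonneg (sq_nonneg x)]
      simpa using hx2
    | (n + 1) =>
      rw [hrec n]
      have hn2 : (0 : ℝ) < (n : ℝ) + 2 := by positivity
      have hsum : |x ^ 2 + ∑ j ∈ Finset.range (n + 1), g j * g (n - j)|
          ≤ M ^ 2 + (n + 1 : ℝ) * M ^ (2 * n + 4) := by
        calc |x ^ 2 + ∑ j ∈ Finset.range (n + 1), g j * g (n - j)|
            ≤ |x ^ 2| + |∑ j ∈ Finset.range (n + 1), g j * g (n - j)| := abs_add_le _ _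
          _ ≤ M ^ 2 + (n + 1 : ℝ) * M ^ (2 * n + 4) := by
              gcongr
              · rw [abs_of_nonneg (sq_nonneg x)]; exact hx2
              · calc |∑ j ∈ Finset.range (n + 1), g j * g (n - j)|
                    ≤ ∑ j ∈ Finset.range (n + 1), |g j * g (n - j)| :=
                      Finset.abs_sum_le_sum_abs _ _
                  _ ≤ ∑ j ∈ Finset.range (n + 1), M ^ (2 * n + 4) := by
                      apply Finset.sum_le_sum
                      intro j hj
                      have hjn : j ≤ n := Nat.lt_succ_iff.mp (Finset.mem_range.mp hj)
                      have h1 : |g j| ≤ M ^ (2 * j + 2) := ih j (by omega)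
                      have h2 : |g (n - j)| ≤ M ^ (2 * (n - j) + 2) := ih (n - j) (by omega)
                      rw [abs_mul]
                      calc |g j| * |g (n - j)| ≤ M ^ (2 * j + 2) * M ^ (2 * (n - j) + 2) := by
                            exact mul_le_mul h1 h2 (abs_nonneg _) (by positivity)
                        _ = M ^ (2 * n + 4) := by
                            rw [← pow_add]; congr 1; omega
                  _ = (n + 1 : ℝ) * M ^ (2 * n + 4) := by
                      rw [Finset.sum_const, Finset.card_range]
                      push_cast; ring
      have key : M ^ 2 + (n + 1 : ℝ) * M ^ (2 * n + 4) ≤ ((n : ℝ) + 2) * M ^ (2 * n + 4) := by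
        have : M ^ 2 ≤ M ^ (2 * n + 4) := pow_le_pow_right₀ hM1 (by omega)
        nlinarith [pow_nonneg hM0 (2 * n + 4)]
      rw [abs_mul, abs_neg, abs_of_nonneg (by positivity : (0:ℝ) ≤ 1 / ((n:ℝ) + 2))]
      rw [div_mul_eq_mul_div, one_mul, div_le_iff₀ hn2]
      calc |x ^ 2 + ∑ j ∈ Finset.range (n + 1), g j * g (n - j)|
          ≤ M ^ 2 + (n + 1 : ℝ) * M ^ (2 * n + 4) := hsum
        _ ≤ ((n : ℝ) + 2) * M ^ (2 * n + 4) := key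
        _ = M ^ (2 * (n + 1) + 2) * ((n : ℝ) + 2) := by ring_nf
end
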